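/- arXiv:1909.13274 — 6 statements merged into one kernel-verified Lean document; each statement's English description precedes it below -/
import Mathlib

section
/- For every real number a ∈ [0,1) and every positive integer k, one has k!^a / k! ≤ 2 / ⌊(1-a)·k⌋!. -/
/-- `(m!)^k ≤ (k!)^m` for `m ≤ k` (monotonicity of `(n!)^(1/n)`). -/
lemma factorial_pow_le_pow_factorial {m k : ℕ} (h : m ≤ k) :
    m.factorial ^ k ≤ k.factorial ^ m := by
  induction k with
  | zero =>
    interval_cases m; simp
  | succ n ih =>
    rcases Nat.lt_or_ge n m with h1 | h1
    · have hm : m = n + 1 := le_antisymm h h1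
      subst hm; exact le_refl _
    · have ih' := ih h1
      have hfac : m.factorial ≤ (n + 1) ^ m :=
        le_trans (Nat.factorial_le_pow m) (Nat.pow_le_pow_left (by omega) m)
      calc m.factorial ^ (n + 1) = m.factorial ^ n * m.factorial := pow_succ _ _
        _ ≤ n.factorial ^ m * (n + 1) ^ m := Nat.mul_le_mul ih' hfac
        _ = (n + 1).factorial ^ m := by
            rw [Nat.factorial_succ, mul_pow, mul_comm]

/-- For every real `a ∈ [0,1)` and every positive integer `k`,
`k!^a / k! ≤ 2 / ⌊(1-a)·k⌋!`. -/
theorem stmt_0 (a : ℝ) (ha0 : 0 ≤ a) (ha1 : a < 1) (k : ℕ) (hk : 1 ≤ k) :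
    (k.factorial : ℝ) ^ a / (k.factorial : ℝ)
      ≤ 2 / ((Nat.floor ((1 - a) * (k : ℝ))).factorial : ℝ) := by
  set m : ℕ := Nat.floor ((1 - a) * (k : ℝ)) with hm
  have hk0 : (0:ℝ) < (k : ℝ) := by exact_mod_cast hk
  have hb : (0:ℝ) ≤ 1 - a := by linarith
  have hmk : (m : ℝ) ≤ (1 - a) * (k : ℝ) :=
    Nat.floor_le (by positivity)
  have hmk' : m ≤ k := by
    have : (m : ℝ) ≤ (k : ℝ) := le_trans hmk (by nlinarith)
    exact_mod_cast this
  have hkf1 : (1:ℝ) ≤ (k.factorial : ℝ) := by exact_mod_cast Nat.one_le_iff_ne_zero.2 k.factorial_ne_zero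
  have hkfpos : (0:ℝ) < (k.factorial : ℝ) := lt_of_lt_of_le one_pos hkf1
  have hmfpos : (0:ℝ) < (m.factorial : ℝ) := by exact_mod_cast m.factorial_pos
  -- key: m! ≤ (k!)^(m/k)
  have hnat := factorial_pow_le_pow_factorial hmk'
  have hreal : ((m.factorial : ℝ)) ^ (k:ℝ) ≤ ((k.factorial : ℝ)) ^ (m:ℝ) := by
    rw [Real.rpow_natCast, Real.rpow_natCast]
    exact_mod_cast hnat
  have hkey : (m.factorial : ℝ) ≤ (k.factorial : ℝ) ^ ((m:ℝ) / (k:ℝ)) := by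
    have h1 : ((m.factorial : ℝ) ^ (k:ℝ)) ^ ((k:ℝ)⁻¹) ≤ ((k.factorial : ℝ) ^ (m:ℝ)) ^ ((k:ℝ)⁻¹) :=
      Real.rpow_le_rpow (by positivity) hreal (by positivity)
    rwa [← Real.rpow_mul hmfpos.le, mul_inv_cancel₀ hk0.ne', Real.rpow_one,
      ← Real.rpow_mul hkfpos.le, ← div_eq_mul_inv] at h1
  have hexp : (m:ℝ) / (k:ℝ) ≤ 1 - a := by
    rw [div_le_iff₀ hk0]; linarith [hmk]
  have hkey2 : (m.factorial : ℝ) ≤ (k.factorial : ℝ) ^ (1 - a) :=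
    le_trans hkey (Real.rpow_le_rpow_of_exponent_le hkf1 hexp)
  rw [div_le_div_iff₀ hkfpos hmfpos]
  calc (k.factorial : ℝ) ^ a * (m.factorial : ℝ)
      ≤ (k.factorial : ℝ) ^ a * (k.factorial : ℝ) ^ (1 - a) :=
        mul_le_mul_of_nonneg_left hkey2 (by positivity)
    _ = (k.factorial : ℝ) := by
        rw [← Real.rpow_add hkfpos]; norm_num
    _ ≤ 2 * (k.factorial : ℝ) := by linarith
end

section
/- For every integer ν ≥ 1 and real s > 0, the ν-th Touchard (Bell) polynomial satisfies T_ν(s) ≤ s·(ν + s)^{ν-1}. -/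
/-- Stirling numbers of the second kind. -/
def stirlingSnd : ℕ → ℕ → ℕ
  | 0, 0 => 1
  | 0, _ + 1 => 0
  | _ + 1, 0 => 0
  | n + 1, k + 1 => (k + 1) * stirlingSnd n (k + 1) + stirlingSnd n k

/-- The `ν`-th Touchard polynomial `T_ν(s) = Σ_{k=1}^ν S(ν,k) s^k`. -/
noncomputable def touchard (ν : ℕ) (s : ℝ) : ℝ :=
  ∑ k ∈ Finset.Icc 1 ν, (stirlingSnd ν k : ℝ) * s ^ k

lemma stirlingSnd_eq_zero_of_lt : ∀ n k, n < k → stirlingSnd n k = 0 := by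
  intro n
  induction n with
  | zero =>
    intro k hk
    cases k with
    | zero => omega
    | succ k => rfl
  | succ n ih =>
    intro k hk
    cases k with
    | zero => omega
    | succ k =>
      show (k + 1) * stirlingSnd n (k + 1) + stirlingSnd n k = 0
      rw [ih (k+1) (by omega), ih k (by omega)]
      simp

lemma stirlingSnd_one : ∀ m, stirlingSnd (m+1) 1 = 1
  | 0 => rfl
  | m+1 => by
    show 1 * stirlingSnd (m+1) 1 + stirlingSnd (m+1) 0 = 1
    have h0 : stirlingSnd (m+1) 0 = 0 := rfl
    rw [stirlingSnd_one m, h0]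

lemma stirlingSnd_le : ∀ n k, stirlingSnd (n+1) (k+1) ≤ Nat.choose n k * (k+1)^(n-k) := by
  intro n
  induction n with
  | zero =>
    intro k
    cases k with
    | zero => simp [stirlingSnd_one]
    | succ k => simp [stirlingSnd, stirlingSnd_eq_zero_of_lt 0 (k+1) (by omega)]
  | succ n ih =>
    intro k
    cases k with
    | zero => simp [stirlingSnd_one]
    | succ j =>
      rw [Nat.succ_sub_succ]
      show (j+2) * stirlingSnd (n+1) (j+2) + stirlingSnd (n+1) (j+1) ≤
          Nat.choose (n+1) (j+1) * (j+2)^(n-j)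
      have hA : (j+2) * stirlingSnd (n+1) (j+2) ≤
          Nat.choose n (j+1) * (j+2)^(n-j) := by
        by_cases hnj : n ≤ j
        · rw [stirlingSnd_eq_zero_of_lt _ _ (by omega), Nat.mul_zero]
          exact Nat.zero_le _
        · calc (j+2) * stirlingSnd (n+1) (j+2)
              ≤ (j+2) * (Nat.choose n (j+1) * (j+2)^(n-(j+1))) :=
                Nat.mul_le_mul_left _ (ih (j+1))
            _ = Nat.choose n (j+1) * (j+2)^(n-j) := by
                rw [show n - j = (n-(j+1))+1 by omega, pow_succ]; ring
      have hB : stirlingSnd (n+1) (j+1) ≤ Nat.choose n j * (j+2)^(n-j) :=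
        le_trans (ih j)
          (Nat.mul_le_mul_left _ (Nat.pow_le_pow_left (by omega) _))
      calc (j+2) * stirlingSnd (n+1) (j+2) + stirlingSnd (n+1) (j+1)
          ≤ Nat.choose n (j+1) * (j+2)^(n-j) + Nat.choose n j * (j+2)^(n-j) :=
            Nat.add_le_add hA hB
        _ = Nat.choose (n+1) (j+1) * (j+2)^(n-j) := by
            rw [Nat.choose_succ_succ]; ring

/-- For every integer `ν ≥ 1` and real `s > 0`, `T_ν(s) ≤ s·(ν+s)^{ν-1}`. -/
theorem stmt_2 (ν : ℕ) (hν : 1 ≤ ν) (s : ℝ) (hs : 0 < s) :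
    touchard ν s ≤ s * ((ν : ℝ) + s) ^ (ν - 1) := by
  obtain ⟨m, rfl⟩ : ∃ m, ν = m + 1 := ⟨ν - 1, by omega⟩
  simp only [Nat.add_sub_cancel]
  have hrhs : s * ((↑(m+1) : ℝ) + s) ^ m =
      ∑ j ∈ Finset.range (m+1),
        (Nat.choose m j : ℝ) * ((m+1 : ℕ) : ℝ) ^ (m - j) * s ^ (1+j) := by
    rw [add_comm ((↑(m+1) : ℝ)) s, add_pow, Finset.mul_sum]
    apply Finset.sum_congr rfl
    intro j _
    rw [add_comm 1 j, pow_succ']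
    ring
  rw [hrhs, touchard, ← Finset.Ico_add_one_right_eq_Icc, Finset.sum_Ico_eq_sum_range]
  simp only [Nat.add_sub_cancel, Nat.succ_sub_one]
  apply Finset.sum_le_sum
  intro j hj
  have hj' : j < m + 1 := Finset.mem_range.mp hj
  have h1 : (stirlingSnd (m+1) (1+j) : ℝ) ≤
      (Nat.choose m j : ℝ) * ((j+1 : ℕ) : ℝ) ^ (m - j) := by
    have := stirlingSnd_le m j
    rw [add_comm 1 j]
    calc (stirlingSnd (m+1) (j+1) : ℝ)
        ≤ ((Nat.choose m j * (j+1)^(m-j) : ℕ) : ℝ) := by exact_mod_cast this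
      _ = (Nat.choose m j : ℝ) * ((j+1 : ℕ) : ℝ) ^ (m - j) := by push_cast; ring
  have h2 : ((j+1 : ℕ) : ℝ) ^ (m - j) ≤ ((m+1 : ℕ) : ℝ) ^ (m - j) := by
    apply pow_le_pow_left₀ (by positivity)
    exact_mod_cast Nat.succ_le_succ (Nat.le_of_lt_succ hj')
  have hsp : (0:ℝ) < s ^ (1+j) := pow_pos hs _
  calc (stirlingSnd (m+1) (1+j) : ℝ) * s ^ (1+j)
      ≤ (Nat.choose m j : ℝ) * ((j+1 : ℕ) : ℝ) ^ (m - j) * s ^ (1+j) :=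
        mul_le_mul_of_nonneg_right h1 hsp.le
    _ ≤ (Nat.choose m j : ℝ) * ((m+1 : ℕ) : ℝ) ^ (m - j) * s ^ (1+j) := by
        apply mul_le_mul_of_nonneg_right _ hsp.le
        exact mul_le_mul_of_nonneg_left h2 (by positivity)
end

section
/- For every positive integer p and every real c ≥ 0, the sum over all set partitions Π of {1,…,p} of |Π|!^c · Π_{π∈Π} |π|!^c is at most 2^p · p!^{max{1,c}}. -/
open Finset

namespace Stmt7

variable {p : ℕ}

abbrev Pt (P : Finpartition (Finset.univ : Finset (Fin p))) : Type :=
  {B : Finset (Fin p) // B ∈ P.parts}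

abbrev T (P : Finpartition (Finset.univ : Finset (Fin p))) : Type :=
  (Pt P ≃ Fin P.parts.card) × ((B : Pt P) → (Fin B.1.card ≃ {x : Fin p // x ∈ B.1}))

lemma card_T (P : Finpartition (Finset.univ : Finset (Fin p))) :
    Fintype.card (T P) = P.parts.card.factorial * ∏ π ∈ P.parts, π.card.factorial := by
  rw [Fintype.card_prod]
  congr 1
  · rw [Fintype.card_equiv (Fintype.equivFinOfCardEq (by simp [Fintype.card_coe]))]
    simp [Fintype.card_coe]
  · rw [Fintype.card_pi, ← Finset.prod_coe_sort P.parts (fun π => π.card.factorial)]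
    refine Finset.prod_congr rfl fun B _ => ?_
    rw [Fintype.card_equiv ((Fintype.equivFinOfCardEq (by simp [Fintype.card_coe] : Fintype.card {x : Fin p // x ∈ B.1} = B.1.card)).symm)]
    simp

section
variable (P : Finpartition (Finset.univ : Finset (Fin p)))
  (e : Pt P ≃ Fin P.parts.card)
  (f : (B : Pt P) → (Fin B.1.card ≃ {x : Fin p // x ∈ B.1}))

def partOf (x : Fin p) : Pt P := ⟨P.part x, P.part_mem.mpr (mem_univ x)⟩

lemma mem_partOf (x : Fin p) : x ∈ (partOf P x).1 := P.mem_part (mem_univ x)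

lemma partOf_eq {B : Pt P} {x : Fin p} (hx : x ∈ B.1) : partOf P x = B :=
  Subtype.ext (P.part_eq_of_mem B.2 hx)

lemma cardB_pos (B : Pt P) : 0 < B.1.card :=
  Finset.card_pos.mpr (P.nonempty_of_mem_parts B.2)

def start (B : Pt P) : ℕ :=
  ∑ B' ∈ univ.filter (fun B' : Pt P => e B' < e B), B'.1.card

lemma filter_le_eq (B : Pt P) :
    univ.filter (fun B' : Pt P => e B' ≤ e B)
      = insert B (univ.filter (fun B' : Pt P => e B' < e B)) := by
  ext B'
  simp only [mem_filter, mem_univ, true_and, mem_insert]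
  constructor
  · intro h
    rcases lt_or_eq_of_le h with h | h
    · exact Or.inr h
    · exact Or.inl (e.injective h)
  · rintro (rfl | h)
    · exact le_refl _
    · exact h.le

lemma start_add_card (B : Pt P) :
    start P e B + B.1.card
      = ∑ B' ∈ univ.filter (fun B' : Pt P => e B' ≤ e B), B'.1.card := by
  rw [filter_le_eq, Finset.sum_insert (by simp), start, Nat.add_comm]

lemma start_add_card_le (B : Pt P) : start P e B + B.1.card ≤ p := by
  rw [start_add_card]
  calc ∑ B' ∈ univ.filter (fun B' : Pt P => e B' ≤ e B), B'.1.card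
      ≤ ∑ B' : Pt P, B'.1.card := Finset.sum_le_sum_of_subset (filter_subset _ _)
    _ = ∑ B' ∈ P.parts, B'.card := Finset.sum_coe_sort _ _
    _ = (Finset.univ : Finset (Fin p)).card := P.sum_card_parts
    _ = p := by simp

lemma start_mono {B B' : Pt P} (h : e B ≤ e B') : start P e B ≤ start P e B' := by
  refine Finset.sum_le_sum_of_subset fun B'' hB'' => ?_
  simp only [mem_filter, mem_univ, true_and] at *
  exact lt_of_lt_of_le hB'' h

lemma start_lt {B B' : Pt P} (h : e B < e B') :
    start P e B + B.1.card ≤ start P e B' := by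
  rw [start_add_card]
  refine Finset.sum_le_sum_of_subset fun B'' hB'' => ?_
  simp only [mem_filter, mem_univ, true_and] at *
  exact lt_of_le_of_lt hB'' h

lemma start_lt_iff {B B' : Pt P} : start P e B < start P e B' ↔ e B < e B' := by
  constructor
  · intro h
    by_contra hn
    exact absurd (start_mono P e (not_lt.mp hn)) (by omega)
  · intro h
    have := start_lt P e h
    have := cardB_pos P B
    omega

lemma startFun_inj : Function.Injective (start P e) := by
  intro B B' h
  by_contra hne
  have hee : e B ≠ e B' := fun h' => hne (e.injective h')
  rcases lt_or_gt_of_ne hee with h' | h' <;>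
    [have := (start_lt_iff P e).mpr h'; have := (start_lt_iff P e).mpr h'] <;> omega

def etav (x : Fin p) : ℕ :=
  start P e (partOf P x) + ((f (partOf P x)).symm ⟨x, mem_partOf P x⟩).val

lemma fcast {B B' : Pt P} (h : B = B') (x : Fin p) (hx : x ∈ B.1) (hx' : x ∈ B'.1) :
    ((f B).symm ⟨x, hx⟩).val = ((f B').symm ⟨x, hx'⟩).val := by subst h; rfl

lemma etav_eq {B : Pt P} {x : Fin p} (hx : x ∈ B.1) :
    etav P e f x = start P e B + ((f B).symm ⟨x, hx⟩).val := by
  have hB : partOf P x = B := partOf_eq P hx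
  rw [etav, fcast P f hB x (mem_partOf P x) hx, hB]

lemma etav_lt (x : Fin p) : etav P e f x < p := by
  have h1 := ((f (partOf P x)).symm ⟨x, mem_partOf P x⟩).isLt
  have h2 := start_add_card_le P e (partOf P x)
  rw [etav]; omega

def eta (x : Fin p) : Fin p := ⟨etav P e f x, etav_lt P e f x⟩

lemma eta_inj : Function.Injective (eta P e f) := by
  intro x y hxy
  have hv : etav P e f x = etav P e f y := congrArg Fin.val hxy
  have hBB : partOf P x = partOf P y := by
    by_contra hne
    have hee : e (partOf P x) ≠ e (partOf P y) := fun h => hne (e.injective h)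
    have hx1 := ((f (partOf P x)).symm ⟨x, mem_partOf P x⟩).isLt
    have hy1 := ((f (partOf P y)).symm ⟨y, mem_partOf P y⟩).isLt
    rw [etav, etav] at hv
    rcases lt_or_gt_of_ne hee with h | h
    · have := start_lt P e h; omega
    · have := start_lt P e h; omega
  have hy' : y ∈ (partOf P x).1 := hBB ▸ mem_partOf P y
  rw [etav_eq P e f (mem_partOf P x), etav_eq P e f hy'] at hv
  have hj : (f (partOf P x)).symm ⟨x, mem_partOf P x⟩
      = (f (partOf P x)).symm ⟨y, hy'⟩ := Fin.ext (by omega)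
  have := (f (partOf P x)).symm.injective hj
  exact congrArg Subtype.val this

noncomputable def sigmaf : Equiv.Perm (Fin p) :=
  Equiv.ofBijective (eta P e f) (Finite.injective_iff_bijective.mp (eta_inj P e f))

lemma sigmaf_apply (x : Fin p) : sigmaf P e f x = eta P e f x := rfl

lemma start_lt_p (B : Pt P) : start P e B < p := by
  have := start_add_card_le P e B
  have := cardB_pos P B
  omega

def startFin (B : Pt P) : Fin p := ⟨start P e B, start_lt_p P e B⟩

lemma startFin_inj : Function.Injective (startFin P e) := by
  intro B B' h
  exact startFun_inj P e (congrArg Fin.val h)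

def Sset : Finset (Fin p) := univ.image (startFin P e)

def rho (S : Finset (Fin p)) (m : Fin p) : ℕ := (S.filter (fun s' => s' ≤ m)).card

lemma rho_eta {B : Pt P} {x : Fin p} (hx : x ∈ B.1) :
    rho (Sset P e) (eta P e f x) = (e B).val + 1 := by
  have hj := ((f B).symm ⟨x, hx⟩).isLt
  have hx' : etav P e f x = start P e B + ((f B).symm ⟨x, hx⟩).val := etav_eq P e f hx
  rw [rho, Sset, Finset.filter_image,
    Finset.card_image_of_injective _ (startFin_inj P e)]
  have hfil : univ.filter (fun B' : Pt P => startFin P e B' ≤ eta P e f x)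
      = univ.filter (fun B' : Pt P => e B' ≤ e B) := by
    refine Finset.filter_congr fun B' _ => ?_
    rw [show (startFin P e B' ≤ eta P e f x) ↔ start P e B' ≤ etav P e f x from Iff.rfl]
    constructor
    · intro h
      by_contra hn
      have := start_lt P e (not_le.mp hn)
      omega
    · intro h
      have := start_mono P e h
      omega
  rw [hfil]
  have himg : (univ.filter (fun B' : Pt P => e B' ≤ e B)).image e = Finset.Iic (e B) := by
    ext i
    simp only [Finset.mem_image, mem_filter, mem_univ, true_and, Finset.mem_Iic]
    constructor
    · rintro ⟨B', h, rfl⟩; exact h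
    · intro h; exact ⟨e.symm i, by simpa using h, by simp⟩
  have := Finset.card_image_of_injective
    (univ.filter (fun B' : Pt P => e B' ≤ e B)) e.injective
  rw [himg] at this
  rw [← this, Fin.card_Iic]

lemma part_recover (x : Fin p) :
    P.part x = univ.filter (fun y =>
      rho (Sset P e) (sigmaf P e f y) = rho (Sset P e) (sigmaf P e f x)) := by
  ext y
  simp only [mem_filter, mem_univ, true_and]
  rw [sigmaf_apply, sigmaf_apply,
    rho_eta P e f (mem_partOf P x), rho_eta P e f (mem_partOf P y)]
  rw [P.mem_part_iff_part_eq_part (mem_univ y) (mem_univ x)]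
  constructor
  · intro h
    have : partOf P y = partOf P x := Subtype.ext h
    rw [this]
  · intro h
    have : partOf P y = partOf P x := e.injective (Fin.ext (by omega))
    exact congrArg Subtype.val this

lemma startFin_eq_min (B : Pt P) :
    startFin P e B = (B.1.image (eta P e f)).min'
      ((P.nonempty_of_mem_parts B.2).image _) := by
  apply le_antisymm
  · apply Finset.le_min'
    intro y hy
    obtain ⟨x, hx, rfl⟩ := Finset.mem_image.mp hy
    show start P e B ≤ etav P e f x
    rw [etav_eq P e f hx]
    omega
  · apply Finset.min'_le
    refine Finset.mem_image.mpr ⟨(f B ⟨0, cardB_pos P B⟩).1, (f B ⟨0, cardB_pos P B⟩).2, ?_⟩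
    apply Fin.ext
    show etav P e f _ = start P e B
    rw [etav_eq P e f (f B ⟨0, cardB_pos P B⟩).2]
    have h1 : (⟨(f B ⟨0, cardB_pos P B⟩).1, (f B ⟨0, cardB_pos P B⟩).2⟩
        : {x : Fin p // x ∈ B.1}) = f B ⟨0, cardB_pos P B⟩ := rfl
    rw [h1, Equiv.symm_apply_apply]
    simp

lemma parts_eq_image : P.parts = univ.image (fun x => P.part x) := by
  ext B
  simp only [Finset.mem_image, mem_univ, true_and]
  constructor
  · intro hB
    obtain ⟨x, hx⟩ := P.nonempty_of_mem_parts hB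
    exact ⟨x, P.part_eq_of_mem hB hx⟩
  · rintro ⟨x, rfl⟩
    exact P.part_mem.mpr (mem_univ x)

end

section
variable (P : Finpartition (Finset.univ : Finset (Fin p)))

lemma recover (e e' : Pt P ≃ Fin P.parts.card)
    (f f' : (B : Pt P) → (Fin B.1.card ≃ {x : Fin p // x ∈ B.1}))
    (hs : sigmaf P e f = sigmaf P e' f') (hS : Sset P e = Sset P e') :
    e = e' ∧ f = f' := by
  have heta : eta P e f = eta P e' f' := by
    funext x
    rw [← sigmaf_apply, ← sigmaf_apply, hs]
  have he : e = e' := by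
    apply Equiv.ext
    intro B
    obtain ⟨x, hx⟩ := P.nonempty_of_mem_parts B.2
    have h1 := rho_eta P e f (B := B) hx
    have h2 := rho_eta P e' f' (B := B) hx
    rw [← heta, ← hS] at h2
    exact Fin.ext (by omega)
  subst he
  refine ⟨rfl, ?_⟩
  funext B
  have hsymm : (f B).symm = (f' B).symm := by
    apply Equiv.ext
    intro y
    have h1 : etav P e f y.1 = start P e B + ((f B).symm ⟨y.1, y.2⟩).val :=
      etav_eq P e f y.2
    have h2 : etav P e f' y.1 = start P e B + ((f' B).symm ⟨y.1, y.2⟩).val :=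
      etav_eq P e f' y.2
    have h3 : etav P e f y.1 = etav P e f' y.1 := congrArg Fin.val (congrFun heta y.1)
    have h4 : (⟨y.1, y.2⟩ : {x : Fin p // x ∈ B.1}) = y := rfl
    rw [h4] at h1 h2
    exact Fin.ext (by omega)
  calc f B = ((f B).symm).symm := by rw [Equiv.symm_symm]
    _ = ((f' B).symm).symm := by rw [hsymm]
    _ = f' B := by rw [Equiv.symm_symm]

end

noncomputable def Phi :
    (Σ P : Finpartition (Finset.univ : Finset (Fin p)), T P)
      → Equiv.Perm (Fin p) × Finset (Fin p) :=
  fun x => (sigmaf x.1 x.2.1 x.2.2, Sset x.1 x.2.1)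

lemma Phi_inj : Function.Injective (Phi (p := p)) := by
  rintro ⟨P, e, f⟩ ⟨P', e', f'⟩ h
  have hs : sigmaf P e f = sigmaf P' e' f' := congrArg Prod.fst h
  have hS : Sset P e = Sset P' e' := congrArg Prod.snd h
  have hP : P = P' := by
    apply Finpartition.ext
    rw [parts_eq_image P, parts_eq_image P']
    refine Finset.image_congr fun x _ => ?_
    rw [part_recover P e f x, part_recover P' e' f' x, hs, hS]
  subst hP
  obtain ⟨he, hf⟩ := recover P e e' f f' hs hS
  subst he; subst hf
  rfl

lemma sum_N_le :
    ∑ P : Finpartition (Finset.univ : Finset (Fin p)),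
      P.parts.card.factorial * ∏ π ∈ P.parts, π.card.factorial
      ≤ 2 ^ p * p.factorial := by
  have h := Fintype.card_le_of_injective _ (Phi_inj (p := p))
  rw [Fintype.card_sigma] at h
  simp_rw [card_T] at h
  rwa [Fintype.card_prod, Fintype.card_perm, Fintype.card_finset, Fintype.card_fin,
    mul_comm] at h

lemma N_le (P : Finpartition (Finset.univ : Finset (Fin p))) :
    P.parts.card.factorial * ∏ π ∈ P.parts, π.card.factorial ≤ p.factorial := by
  rw [← card_T P]
  have hcp : Fintype.card (Equiv.Perm (Fin p)) = p.factorial := by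
    rw [Fintype.card_perm, Fintype.card_fin]
  rw [← hcp]
  refine Fintype.card_le_of_injective (fun t => sigmaf P t.1 t.2) ?_
  intro t t' h
  have h' : sigmaf P t.1 t.2 = sigmaf P t'.1 t'.2 := h
  have heta : eta P t.1 t.2 = eta P t'.1 t'.2 := by
    funext x; rw [← sigmaf_apply, ← sigmaf_apply, h']
  have hS : Sset P t.1 = Sset P t'.1 := by
    rw [Sset, Sset]
    refine Finset.image_congr fun B _ => ?_
    rw [startFin_eq_min P t.1 t.2, startFin_eq_min P t'.1 t'.2, heta]
  obtain ⟨he, hf⟩ := recover P t.1 t'.1 t.2 t'.2 h' hS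
  exact Prod.ext he hf

end Stmt7

open Stmt7

/-- For every positive integer `p` and real `c ≥ 0`, the sum over all set
partitions `Π` of `{1,…,p}` of `|Π|!^c · Π_{π∈Π} |π|!^c` is at most
`2^p · p!^{max 1 c}`. -/
theorem stmt_7 (p : ℕ) (hp : 1 ≤ p) (c : ℝ) (hc : 0 ≤ c) :
    ∑ P : Finpartition (Finset.univ : Finset (Fin p)),
        ((P.parts.card.factorial : ℝ) ^ c * ∏ π ∈ P.parts, ((π.card.factorial : ℝ) ^ c))
      ≤ 2 ^ p * (p.factorial : ℝ) ^ (max 1 c) := by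
  set c' := max 1 c with hc'
  have hc1 : (1 : ℝ) ≤ c' := le_max_left _ _
  have hcc : c ≤ c' := le_max_right _ _
  have hfac1 : (1 : ℝ) ≤ (p.factorial : ℝ) := by
    exact_mod_cast Nat.one_le_iff_ne_zero.mpr p.factorial_pos.ne'
  set N : Finpartition (Finset.univ : Finset (Fin p)) → ℕ :=
    fun P => P.parts.card.factorial * ∏ π ∈ P.parts, π.card.factorial with hNdef
  have key : ∀ P : Finpartition (Finset.univ : Finset (Fin p)),
      (P.parts.card.factorial : ℝ) ^ c * ∏ π ∈ P.parts, ((π.card.factorial : ℝ) ^ c)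
        ≤ (p.factorial : ℝ) ^ (c' - 1) * (N P : ℝ) := by
    intro P
    have hterm : (P.parts.card.factorial : ℝ) ^ c * ∏ π ∈ P.parts, ((π.card.factorial : ℝ) ^ c)
        = (N P : ℝ) ^ c := by
      rw [Real.finset_prod_rpow _ _ (fun i _ => by positivity) c,
        ← Real.mul_rpow (by positivity) (by positivity)]
      congr 1
      rw [hNdef]
      push_cast
      ring
    have h1N : (1 : ℝ) ≤ (N P : ℝ) := by
      have : 1 ≤ N P := Nat.one_le_iff_ne_zero.mpr
        (Nat.mul_ne_zero P.parts.card.factorial_pos.ne'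
          (Finset.prod_ne_zero_iff.mpr fun π _ => π.card.factorial_pos.ne'))
      exact_mod_cast this
    have h0N : (0 : ℝ) < (N P : ℝ) := by linarith
    have hNle : (N P : ℝ) ≤ (p.factorial : ℝ) := by exact_mod_cast N_le P
    rw [hterm]
    calc (N P : ℝ) ^ c ≤ (N P : ℝ) ^ c' := Real.rpow_le_rpow_of_exponent_le h1N hcc
      _ = (N P : ℝ) ^ (c' - 1) * (N P : ℝ) := by
          have h := Real.rpow_add h0N (c' - 1) 1
          rw [sub_add_cancel, Real.rpow_one] at h
          exact h
      _ ≤ (p.factorial : ℝ) ^ (c' - 1) * (N P : ℝ) := by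
          exact mul_le_mul_of_nonneg_right
            (Real.rpow_le_rpow (by positivity) hNle (by linarith)) (by positivity)
  calc ∑ P : Finpartition (Finset.univ : Finset (Fin p)),
        ((P.parts.card.factorial : ℝ) ^ c * ∏ π ∈ P.parts, ((π.card.factorial : ℝ) ^ c))
      ≤ ∑ P : Finpartition (Finset.univ : Finset (Fin p)),
          (p.factorial : ℝ) ^ (c' - 1) * (N P : ℝ) :=
        Finset.sum_le_sum fun P _ => key P
    _ = (p.factorial : ℝ) ^ (c' - 1)
          * ∑ P : Finpartition (Finset.univ : Finset (Fin p)), (N P : ℝ) := by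
        rw [Finset.mul_sum]
    _ ≤ (p.factorial : ℝ) ^ (c' - 1) * (2 ^ p * (p.factorial : ℝ)) := by
        refine mul_le_mul_of_nonneg_left ?_ (by positivity)
        have h := sum_N_le (p := p)
        calc ∑ P : Finpartition (Finset.univ : Finset (Fin p)), (N P : ℝ)
            = ((∑ P : Finpartition (Finset.univ : Finset (Fin p)), N P : ℕ) : ℝ) := by
              push_cast; rfl
          _ ≤ ((2 ^ p * p.factorial : ℕ) : ℝ) := by exact_mod_cast h
          _ = 2 ^ p * (p.factorial : ℝ) := by push_cast; ring
    _ = 2 ^ p * (p.factorial : ℝ) ^ c' := by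
        have hfp : (0 : ℝ) < (p.factorial : ℝ) := by linarith
        have h := Real.rpow_add hfp (c' - 1) 1
        rw [sub_add_cancel, Real.rpow_one] at h
        rw [← mul_assoc, mul_comm ((p.factorial : ℝ) ^ (c' - 1)) (2 ^ p : ℝ), mul_assoc, ← h]
end

section
/- The Lebesgue volume of the set {x ∈ (ℝ^d)^{p-1} : ‖x‖_sig ≤ 1} is at most ϑ_d^{p-1} · p^{p-2}, and in particular at most (e·ϑ_d)^{p-1} · p!. -/
open MeasureTheory

/-- Distance between two sets of points: the infimum of pairwise distances. -/
noncomputable def setDist {E : Type*} [PseudoMetricSpace E] (A B : Set E) : ℝ :=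
  sInf {r | ∃ a ∈ A, ∃ b ∈ B, r = dist a b}

/-- The "sphere of influence" norm of `x = (x_1,…,x_n) ∈ (ℝ^d)^n`:
`‖x‖_sig = max_{I ⊆ {1,…,n}} dist((0, x_I), x_{I^c})`. -/
noncomputable def sigNorm (d n : ℕ) (x : Fin n → EuclideanSpace ℝ (Fin d)) : ℝ :=
  sSup {r | ∃ I : Finset (Fin n), I ≠ Finset.univ ∧
    r = setDist (insert 0 (x '' ↑I)) (x '' ↑(Iᶜ))}

theorem det_one_sub_nilpotent {ι : Type*} [Fintype ι] [DecidableEq ι] (M : Matrix ι ι ℝ)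
    (hM : IsNilpotent M) : (1 - M).det = 1 := by
  have h := Matrix.isUnit_charpolyRev_of_isNilpotent hM
  obtain ⟨r, hC⟩ := Polynomial.isUnit_iff.mp h
  have h0 : Polynomial.eval 0 M.charpolyRev = 1 := Matrix.eval_charpolyRev
  have h1 : Polynomial.eval 1 M.charpolyRev = (1 - M).det := by
    rw [Matrix.charpolyRev, ← Polynomial.coe_evalRingHom, RingHom.map_det]
    congr 1
    ext i j
    rcases eq_or_ne i j with rfl | hij
    · simp [Matrix.one_apply]
    · simp [Matrix.one_apply, hij]
  rw [← hC.2] at h0 h1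
  simp at h0
  rw [← h1]; simp [h0]

variable {d n : ℕ}

noncomputable def Nmap (d n : ℕ) (f : Fin (n+1) → Fin (n+1)) :
    (Fin n → EuclideanSpace ℝ (Fin d)) →ₗ[ℝ] (Fin n → EuclideanSpace ℝ (Fin d)) :=
  LinearMap.pi (fun i => Fin.cases 0 (fun j => LinearMap.proj j) (f i.succ))

theorem Nmap_apply (f : Fin (n+1) → Fin (n+1)) (x : Fin n → EuclideanSpace ℝ (Fin d))
    (i : Fin n) : Nmap d n f x i = Fin.cases 0 x (f i.succ) := by
  rw [Nmap, LinearMap.pi_apply]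
  induction f i.succ using Fin.cases with
  | zero => simp
  | succ j => simp

theorem Nmap_pow (f : Fin (n+1) → Fin (n+1)) (hf0 : f 0 = 0) (k : ℕ)
    (x : Fin n → EuclideanSpace ℝ (Fin d)) (i : Fin n) :
    (Nmap d n f ^ k) x i = Fin.cases 0 x (f^[k] i.succ) := by
  induction k generalizing x i with
  | zero => simp
  | succ k ih =>
    rw [pow_succ', Module.End.mul_apply, Nmap_apply, Function.iterate_succ_apply]
    induction f i.succ using Fin.cases with
    | zero => rw [Function.iterate_fixed hf0]; simp
    | succ j => simp [ih]

theorem Nmap_nilpotent (f : Fin (n+1) → Fin (n+1)) (hf0 : f 0 = 0)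
    (hre : ∀ v, ∃ k, f^[k] v = 0) : IsNilpotent (Nmap d n f) := by
  classical
  set K := Finset.univ.sup (fun v : Fin (n+1) => Nat.find (hre v)) with hK
  refine ⟨K, ?_⟩
  apply LinearMap.ext; intro x
  funext i
  have h1 : f^[K] i.succ = 0 := by
    have hk := Nat.find_spec (hre i.succ)
    have hle : Nat.find (hre i.succ) ≤ K :=
      Finset.le_sup (f := fun v => Nat.find (hre v)) (Finset.mem_univ i.succ)
    calc f^[K] i.succ = f^[K - Nat.find (hre i.succ)] (f^[Nat.find (hre i.succ)] i.succ) := by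
          rw [← Function.iterate_add_apply, Nat.sub_add_cancel hle]
      _ = 0 := by rw [hk, Function.iterate_fixed hf0]
  rw [Nmap_pow f hf0 K x i, h1]
  simp

instance haarPi (d n : ℕ) :
    (volume : Measure (Fin n → EuclideanSpace ℝ (Fin d))).IsAddHaarMeasure := by constructor

noncomputable def Tmap (d n : ℕ) (f : Fin (n+1) → Fin (n+1)) :
    (Fin n → EuclideanSpace ℝ (Fin d)) →ₗ[ℝ] (Fin n → EuclideanSpace ℝ (Fin d)) :=
  LinearMap.id - Nmap d n f

set_option maxHeartbeats 1000000 in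
set_option synthInstance.maxHeartbeats 200000 in
theorem Tmap_det (f : Fin (n+1) → Fin (n+1)) (hf0 : f 0 = 0)
    (hre : ∀ v, ∃ k, f^[k] v = 0) :
    LinearMap.det (Tmap d n f) = 1 := by
  classical
  let b := Pi.basis (fun _ : Fin n => (EuclideanSpace.basisFun (Fin d) ℝ).toBasis)
  rw [← LinearMap.det_toMatrix b]
  have hpow : ∀ (g : (Fin n → EuclideanSpace ℝ (Fin d)) →ₗ[ℝ] _) (k : ℕ),
      LinearMap.toMatrix b b (g ^ k) = (LinearMap.toMatrix b b g) ^ k := by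
    intro g k
    induction k with
    | zero => simp [LinearMap.toMatrix_id]
    | succ m ih => rw [pow_succ, pow_succ, ← ih, ← LinearMap.toMatrix_mul]
  have hsub : LinearMap.toMatrix b b (Tmap d n f)
      = 1 - LinearMap.toMatrix b b (Nmap d n f) := by
    rw [Tmap]
    simp only [map_sub]
    rw [LinearMap.toMatrix_id]
  rw [hsub]
  apply det_one_sub_nilpotent
  obtain ⟨K, hK⟩ := Nmap_nilpotent f hf0 hre (d := d)
  exact ⟨K, by rw [← hpow, hK]; simp only [map_zero]⟩

theorem volume_Bset (hd : 1 ≤ d) (f : Fin (n+1) → Fin (n+1)) (hf0 : f 0 = 0)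
    (hre : ∀ v, ∃ k, f^[k] v = 0) :
    volume {x : Fin n → EuclideanSpace ℝ (Fin d) |
        ∀ i : Fin n, dist (x i) (Fin.cases 0 x (f i.succ)) ≤ 1}
      = (volume (Metric.ball (0 : EuclideanSpace ℝ (Fin d)) 1))^n := by
  have hset : {x : Fin n → EuclideanSpace ℝ (Fin d) |
        ∀ i : Fin n, dist (x i) (Fin.cases 0 x (f i.succ)) ≤ 1}
      = ⇑(Tmap d n f) ⁻¹'
        (Set.univ.pi fun _ : Fin n => Metric.closedBall (0 : EuclideanSpace ℝ (Fin d)) 1) := by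
    ext x
    simp only [Set.mem_setOf_eq, Set.mem_preimage, Set.mem_pi, Set.mem_univ, forall_true_left,
      Metric.mem_closedBall]
    refine forall_congr' fun i => ?_
    rw [dist_eq_norm, Tmap, LinearMap.sub_apply, LinearMap.id_apply, Pi.sub_apply,
      Nmap_apply, dist_zero_right]
  rw [hset, Measure.addHaar_preimage_linearMap volume
    (by rw [Tmap_det f hf0 hre]; norm_num) _, Tmap_det f hf0 hre, volume_pi_pi]
  have : Nonempty (Fin d) := ⟨⟨0, hd⟩⟩
  rw [Measure.addHaar_closedBall_eq_addHaar_ball volume (0 : EuclideanSpace ℝ (Fin d)) 1]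
  norm_num

/-- partial parent map encoded by a list of (child, parent) pairs; head = most recent. -/
def pmapL : List (Fin (n+1) × Fin (n+1)) → Fin (n+1) → Option (Fin (n+1))
  | [], _ => none
  | e :: l, v => if e.1 = v then some e.2 else pmapL l v

theorem pmapL_eq_none_iff (l : List (Fin (n+1) × Fin (n+1))) (v : Fin (n+1)) :
    pmapL l v = none ↔ v ∉ l.map Prod.fst := by
  induction l with
  | nil => simp [pmapL]
  | cons e l ih =>
    by_cases h : e.1 = v <;> simp [pmapL, h, ih, eq_comm (a := v)]

theorem pmapL_mem (l : List (Fin (n+1) × Fin (n+1))) {v u : Fin (n+1)}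
    (h : pmapL l v = some u) : (v, u) ∈ l := by
  induction l with
  | nil => simp [pmapL] at h
  | cons e l ih =>
    rw [pmapL] at h
    split at h
    · simp_all only [Option.some.injEq, List.mem_cons]
      left; rename_i he; rw [← h, ← he]
    · exact List.mem_cons_of_mem _ (ih h)

/-- one step of the partial parent map -/
def StepRel (l : List (Fin (n+1) × Fin (n+1))) (a b : Fin (n+1)) : Prop :=
  pmapL l a = some b

/-- reachability -/
def Reach (l : List (Fin (n+1) × Fin (n+1))) : Fin (n+1) → Fin (n+1) → Prop :=
  Relation.ReflTransGen (StepRel l)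

open Classical in
noncomputable def rootOf (l : List (Fin (n+1) × Fin (n+1))) (v : Fin (n+1)) : Fin (n+1) :=
  if h : ∃ r, Reach l v r ∧ pmapL l r = none then h.choose else v

theorem reach_root_unique (l : List (Fin (n+1) × Fin (n+1))) {v r₁ r₂ : Fin (n+1)}
    (h1 : Reach l v r₁) (hr1 : pmapL l r₁ = none)
    (h2 : Reach l v r₂) (hr2 : pmapL l r₂ = none) : r₁ = r₂ := by
  induction h1 using Relation.ReflTransGen.head_induction_on with
  | refl =>
    rcases (Relation.ReflTransGen.cases_head h2) with rfl | ⟨c, hc, _⟩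
    · rfl
    · rw [StepRel, hr1] at hc; simp at hc
  | head hab _ ih =>
    rcases (Relation.ReflTransGen.cases_head h2) with rfl | ⟨c, hc, hc2⟩
    · rw [StepRel, hr2] at hab; simp at hab
    · rw [StepRel] at hab hc; rw [hab] at hc
      injection hc with hc; subst hc
      exact ih hc2

theorem rootOf_spec (l : List (Fin (n+1) × Fin (n+1))) (v : Fin (n+1))
    (h : ∃ r, Reach l v r ∧ pmapL l r = none) :
    Reach l v (rootOf l v) ∧ pmapL l (rootOf l v) = none := by
  rw [rootOf, dif_pos h]; exact h.choose_spec

theorem rootOf_eq (l : List (Fin (n+1) × Fin (n+1))) {v r : Fin (n+1)}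
    (hr : Reach l v r) (hroot : pmapL l r = none) : rootOf l v = r := by
  have h : ∃ r, Reach l v r ∧ pmapL l r = none := ⟨r, hr, hroot⟩
  obtain ⟨h1, h2⟩ := rootOf_spec l v h
  exact reach_root_unique l h1 h2 hr hroot

open Classical in
noncomputable def stepF (l : List (Fin (n+1) × Fin (n+1))) : Finset (Fin (n+1) × Fin (n+1)) :=
  Finset.univ.filter (fun e => pmapL l e.1 = none ∧ rootOf l e.2 ≠ e.1)

noncomputable def validF : ℕ → Finset (List (Fin (n+1) × Fin (n+1)))
  | 0 => {[]}
  | L+1 => (validF L).biUnion (fun l => (stepF l).image (fun e => e :: l))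

/-- the set of parentless ("root") vertices -/
def rootless (l : List (Fin (n+1) × Fin (n+1))) : Finset (Fin (n+1)) :=
  Finset.univ.filter (fun v => pmapL l v = none)

theorem pmapL_cons_eq_none_iff (e : Fin (n+1) × Fin (n+1)) (l : List (Fin (n+1) × Fin (n+1)))
    (v : Fin (n+1)) : pmapL (e :: l) v = none ↔ pmapL l v = none ∧ v ≠ e.1 := by
  rw [pmapL]
  by_cases h : e.1 = v
  · simp [h, eq_comm (a := v)]
  · simp [h, Ne.symm h]

theorem rootless_cons (e : Fin (n+1) × Fin (n+1)) (l : List (Fin (n+1) × Fin (n+1))) :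
    rootless (e :: l) = (rootless l).erase e.1 := by
  ext v
  simp [rootless, Finset.mem_erase, pmapL_cons_eq_none_iff, and_comm]

theorem card_rootless_of_valid {L : ℕ} {l : List (Fin (n+1) × Fin (n+1))}
    (hl : l ∈ validF L) : (rootless l).card = (n+1) - L := by
  induction L generalizing l with
  | zero =>
    rw [validF] at hl
    simp at hl
    subst hl
    have : rootless ([] : List (Fin (n+1) × Fin (n+1))) = Finset.univ := by
      ext v; simp [rootless, pmapL]
    rw [this]; simp
  | succ L ih =>
    rw [validF] at hl
    simp only [Finset.mem_biUnion, Finset.mem_image] at hl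
    obtain ⟨l', hl', e, he, rfl⟩ := hl
    have he1 : e.1 ∈ rootless l' := by
      simp only [stepF, Finset.mem_filter] at he
      simp [rootless, he.2.1]
    rw [rootless_cons, Finset.card_erase_of_mem he1, ih hl']
    omega

/-- every vertex reaches a root, in any valid list -/
theorem exists_root_of_valid {L : ℕ} {l : List (Fin (n+1) × Fin (n+1))}
    (hl : l ∈ validF L) (v : Fin (n+1)) :
    ∃ r, Reach l v r ∧ pmapL l r = none := by
  induction L generalizing l v with
  | zero =>
    rw [validF] at hl; simp at hl; subst hl
    exact ⟨v, Relation.ReflTransGen.refl, by simp [pmapL]⟩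
  | succ L ih =>
    rw [validF] at hl
    simp only [Finset.mem_biUnion, Finset.mem_image] at hl
    obtain ⟨l', hl', e, he, rfl⟩ := hl
    simp only [stepF, Finset.mem_filter] at he
    obtain ⟨-, he1, he2⟩ := he
    -- lifting reach from l' to e :: l'
    have hlift : ∀ a b, Reach l' a b → Reach (e :: l') a b := by
      intro a b hab
      induction hab with
      | refl => exact Relation.ReflTransGen.refl
      | tail hac hstep ih2 =>
        rename_i c cc
        refine Relation.ReflTransGen.tail ih2 ?_
        rw [StepRel] at hstep
        have hne : e.1 ≠ c := by
          intro h; rw [h] at he1; rw [he1] at hstep; simp at hstep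
        rw [StepRel, pmapL]
        simp [hne, hstep]
    obtain ⟨r, hr, hroot⟩ := ih hl' v
    by_cases hre : r = e.1
    · -- continue through the new edge to the root of e.2 in l'
      obtain ⟨r₂, hr₂, hroot₂⟩ := ih hl' e.2
      have hr2ne : r₂ ≠ e.1 := by
        intro h
        apply he2
        rw [← h]
        exact rootOf_eq l' hr₂ hroot₂
      refine ⟨r₂, ?_, ?_⟩
      · refine Relation.ReflTransGen.trans (hlift _ _ hr) ?_
        refine Relation.ReflTransGen.head ?_ (hlift _ _ hr₂)
        rw [hre, StepRel, pmapL]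
        simp
      · rw [pmapL_cons_eq_none_iff]; exact ⟨hroot₂, hr2ne⟩
    · exact ⟨r, hlift _ _ hr, by rw [pmapL_cons_eq_none_iff]; exact ⟨hroot, hre⟩⟩

theorem card_stepF_le {L : ℕ} {l : List (Fin (n+1) × Fin (n+1))} (hl : l ∈ validF L) :
    (stepF l).card ≤ (n+1) * ((n+1) - L - 1) := by
  classical
  have hsub : stepF l ⊆ Finset.univ.biUnion
      (fun u : Fin (n+1) => ((rootless l).erase (rootOf l u)).image (fun v => (v, u))) := by
    intro e he
    simp only [stepF, Finset.mem_filter] at he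
    obtain ⟨-, h1, h2⟩ := he
    simp only [Finset.mem_biUnion, Finset.mem_image, Finset.mem_erase]
    exact ⟨e.2, Finset.mem_univ _, e.1, ⟨fun hh => h2 hh.symm, by simp [rootless, h1]⟩, rfl⟩
  refine le_trans (Finset.card_le_card hsub) ?_
  refine le_trans (Finset.card_biUnion_le) ?_
  refine le_trans (Finset.sum_le_card_nsmul _ _ ((n+1) - L - 1) ?_) ?_
  · intro u _
    refine le_trans (Finset.card_image_le) ?_
    have hmem : rootOf l u ∈ rootless l := by
      obtain ⟨r, hr, hroot⟩ := exists_root_of_valid hl u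
      rw [rootOf_eq l hr hroot]
      simp [rootless, hroot]
    rw [Finset.card_erase_of_mem hmem, card_rootless_of_valid hl]
  · simp [mul_comm]

theorem card_validF_le (L : ℕ) :
    (validF (n := n) L).card ≤ ∏ i ∈ Finset.range L, ((n+1) * ((n+1) - i - 1)) := by
  induction L with
  | zero => simp [validF]
  | succ L ih =>
    rw [validF]
    refine le_trans (Finset.card_biUnion_le) ?_
    rw [Finset.prod_range_succ]
    calc ∑ l ∈ validF L, ((stepF l).image (fun e => e :: l)).card
        ≤ ∑ l ∈ validF L, ((n+1) * ((n+1) - L - 1)) := by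
          refine Finset.sum_le_sum fun l hl => ?_
          exact le_trans (Finset.card_image_le) (card_stepF_le hl)
      _ = (validF (n := n) L).card * ((n+1) * ((n+1) - L - 1)) := by
          rw [Finset.sum_const, smul_eq_mul]
      _ ≤ _ := Nat.mul_le_mul_right _ ih

theorem reach_iterate {l : List (Fin (n+1) × Fin (n+1))} {g : Fin (n+1) → Fin (n+1)}
    (hstep : ∀ a b, pmapL l a = some b → b = g a) {x y : Fin (n+1)}
    (h : Reach l x y) : ∃ m, y = g^[m] x := by
  induction h with
  | refl => exact ⟨0, rfl⟩
  | tail hac hs ih =>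
    obtain ⟨m, rfl⟩ := ih
    exact ⟨m + 1, by rw [Function.iterate_succ_apply', ← hstep _ _ hs]⟩

theorem no_cycle {g : Fin (n+1) → Fin (n+1)} {w : Fin (n+1)} (hw : g w = w)
    (hg : ∀ v, ∃ j, g^[j] v = w) {v : Fin (n+1)} (hv : v ≠ w) {m : ℕ}
    (hm : g^[m+1] v = v) : False := by
  obtain ⟨j, hj⟩ := hg v
  have hper : ∀ q : ℕ, g^[(m+1) * q] v = v := by
    intro q
    induction q with
    | zero => simp
    | succ q ih => rw [Nat.mul_succ, Function.iterate_add_apply, hm, ih]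
  have hge : j ≤ (m+1) * (j+1) := by nlinarith
  apply hv
  calc v = g^[(m+1) * (j+1)] v := (hper (j+1)).symm
    _ = g^[(m+1) * (j+1) - j] (g^[j] v) := by rw [← Function.iterate_add_apply]; congr 1; omega
    _ = w := by rw [hj, Function.iterate_fixed hw]

/-- the chronological list of edges of a tree rooted at `w`, in order `σ` -/
def edgeFun (g : Fin (n+1) → Fin (n+1)) (w : Fin (n+1)) (σ : Equiv.Perm (Fin n))
    (i : Fin n) : Fin (n+1) × Fin (n+1) :=
  (w.succAbove (σ i), g (w.succAbove (σ i)))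

def edgeList (g : Fin (n+1) → Fin (n+1)) (w : Fin (n+1)) (σ : Equiv.Perm (Fin n)) :
    List (Fin (n+1) × Fin (n+1)) :=
  (List.ofFn (edgeFun g w σ)).reverse

theorem mem_partial_edgeList (g : Fin (n+1) → Fin (n+1)) (w : Fin (n+1))
    (σ : Equiv.Perm (Fin n)) (k : ℕ) {a b : Fin (n+1)}
    (h : (a, b) ∈ ((List.ofFn (edgeFun g w σ)).take k).reverse) :
    (∃ j : Fin n, a = w.succAbove (σ j)) ∧ b = g a := by
  rw [List.mem_reverse] at h
  have h2 := List.mem_of_mem_take h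
  rw [List.mem_ofFn] at h2
  obtain ⟨j, hj⟩ := h2
  rw [edgeFun] at hj
  have ha : a = w.succAbove (σ j) := by
    have := congrArg Prod.fst hj; simpa using this.symm
  have hb : b = g (w.succAbove (σ j)) := by
    have := congrArg Prod.snd hj; simpa using this.symm
  exact ⟨⟨j, ha⟩, by rw [hb, ha]⟩

theorem firsts_partial_edgeList (g : Fin (n+1) → Fin (n+1)) (w : Fin (n+1))
    (σ : Equiv.Perm (Fin n)) (k : ℕ) {a : Fin (n+1)}
    (h : a ∈ (((List.ofFn (edgeFun g w σ)).take k).reverse).map Prod.fst) :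
    ∃ j : Fin n, (j : ℕ) < k ∧ a = w.succAbove (σ j) := by
  rw [List.map_reverse, List.mem_reverse, List.mem_map] at h
  obtain ⟨e, he, hea⟩ := h
  obtain ⟨idx, hidx, hgetl⟩ := List.mem_take_iff_getElem.mp he
  rw [List.getElem_ofFn] at hgetl
  refine ⟨⟨idx, ?_⟩, ?_, ?_⟩
  · have := List.length_ofFn (f := edgeFun g w σ); omega
  · simp only []; omega
  · rw [← hea, ← hgetl]; rfl

theorem partial_edgeList_valid (g : Fin (n+1) → Fin (n+1)) (w : Fin (n+1))
    (σ : Equiv.Perm (Fin n)) (hw : g w = w) (hg : ∀ v, ∃ j, g^[j] v = w)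
    (k : ℕ) (hk : k ≤ n) :
    ((List.ofFn (edgeFun g w σ)).take k).reverse ∈ validF k := by
  induction k with
  | zero => simp [validF]
  | succ k ih =>
    have hk' : k ≤ n := Nat.le_of_succ_le hk
    have hlen : (List.ofFn (edgeFun g w σ)).length = n := by simp
    have hkk : k < (List.ofFn (edgeFun g w σ)).length := by omega
    set l := ((List.ofFn (edgeFun g w σ)).take k).reverse with hl
    have hmem : l ∈ validF k := ih hk'
    set kf : Fin n := ⟨k, by omega⟩ with hkf
    set e : Fin (n+1) × Fin (n+1) := edgeFun g w σ kf with he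
    have htake : ((List.ofFn (edgeFun g w σ)).take (k+1)).reverse = e :: l := by
      rw [List.take_succ]
      rw [List.reverse_append]
      congr 1
      rw [List.getElem?_eq_getElem hkk, List.getElem_ofFn]
      rfl
    rw [htake, validF]
    simp only [Finset.mem_biUnion, Finset.mem_image]
    refine ⟨l, hmem, e, ?_, rfl⟩
    -- e ∈ stepF l
    have hstepchar : ∀ a b, pmapL l a = some b → b = g a := by
      intro a b hab
      exact (mem_partial_edgeList g w σ k (pmapL_mem l hab)).2
    have hvk : e.1 = w.succAbove (σ kf) := rfl
    have h1 : pmapL l e.1 = none := by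
      rw [pmapL_eq_none_iff]
      intro hmem2
      obtain ⟨j, hj1, hj2⟩ := firsts_partial_edgeList g w σ k hmem2
      rw [hvk] at hj2
      have : σ kf = σ j := Fin.succAbove_right_injective hj2
      have hkj : kf = j := σ.injective this
      have : (kf : ℕ) = (j : ℕ) := by rw [hkj]
      simp only [hkf] at this
      omega
    refine Finset.mem_filter.mpr ⟨Finset.mem_univ _, h1, ?_⟩
    -- rootOf l e.2 ≠ e.1
    intro hroot
    have hvkw : e.1 ≠ w := Fin.succAbove_ne w (σ kf)
    obtain ⟨r, hr, hrnone⟩ := exists_root_of_valid hmem e.2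
    rw [rootOf_eq l hr hrnone] at hroot
    subst hroot
    obtain ⟨m, hm⟩ := reach_iterate hstepchar hr
    have he2 : e.2 = g e.1 := rfl
    rw [he2] at hm
    rw [← Function.iterate_succ_apply] at hm
    exact no_cycle hw hg hvkw hm.symm

theorem edgeList_valid (g : Fin (n+1) → Fin (n+1)) (w : Fin (n+1))
    (σ : Equiv.Perm (Fin n)) (hw : g w = w) (hg : ∀ v, ∃ j, g^[j] v = w) :
    edgeList g w σ ∈ validF n := by
  have := partial_edgeList_valid g w σ hw hg n le_rfl
  rw [edgeList]
  rwa [List.take_of_length_le (by simp)] at this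

open Classical in
noncomputable def treeF (n : ℕ) : Finset (Fin (n+1) → Fin (n+1)) :=
  Finset.univ.filter (fun f => f 0 = 0 ∧ ∀ v, ∃ k, f^[k] v = 0)

def conjT (f : Fin (n+1) → Fin (n+1)) (w : Fin (n+1)) : Fin (n+1) → Fin (n+1) :=
  fun v => Equiv.swap 0 w (f (Equiv.swap 0 w v))

theorem conjT_iterate (f : Fin (n+1) → Fin (n+1)) (w : Fin (n+1)) (k : ℕ) (v : Fin (n+1)) :
    (conjT f w)^[k] v = Equiv.swap 0 w (f^[k] (Equiv.swap 0 w v)) := by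
  induction k generalizing v with
  | zero => simp
  | succ k ih =>
    rw [Function.iterate_succ_apply, Function.iterate_succ_apply, ih, conjT,
      Equiv.swap_apply_self]

theorem conjT_root (f : Fin (n+1) → Fin (n+1)) (w : Fin (n+1)) (hf : f 0 = 0) :
    conjT f w w = w := by
  rw [conjT, Equiv.swap_apply_right, hf, Equiv.swap_apply_left]

theorem conjT_reach (f : Fin (n+1) → Fin (n+1)) (w : Fin (n+1))
    (hf : ∀ v, ∃ k, f^[k] v = 0) (v : Fin (n+1)) : ∃ k, (conjT f w)^[k] v = w := by
  obtain ⟨k, hk⟩ := hf (Equiv.swap 0 w v)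
  exact ⟨k, by rw [conjT_iterate, hk, Equiv.swap_apply_left]⟩

theorem conjT_conjT (f : Fin (n+1) → Fin (n+1)) (w : Fin (n+1)) :
    conjT (conjT f w) w = f := by
  funext v
  rw [conjT, conjT, Equiv.swap_apply_self, Equiv.swap_apply_self]

theorem card_treeF_mul_le (n : ℕ) :
    (treeF n).card * ((n+1) * (n.factorial)) ≤ (validF (n := n) n).card := by
  classical
  have key : ((treeF n) ×ˢ ((Finset.univ : Finset (Fin (n+1))) ×ˢ
      (Finset.univ : Finset (Equiv.Perm (Fin n))))).card ≤ (validF (n := n) n).card := by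
    apply Finset.card_le_card_of_injOn
      (fun t => edgeList (conjT t.1 t.2.1) t.2.1 t.2.2)
    · intro t ht
      simp only [Finset.mem_coe, treeF, Finset.mem_product, Finset.mem_filter] at ht
      exact edgeList_valid _ _ _ (conjT_root _ _ ht.1.2.1) (conjT_reach _ _ ht.1.2.2)
    · rintro ⟨f₁, w₁, σ₁⟩ h₁ ⟨f₂, w₂, σ₂⟩ h₂ heq
      simp only [Finset.mem_coe, Finset.mem_product, treeF, Finset.mem_filter] at h₁ h₂
      simp only [edgeList, List.reverse_inj] at heq
      have hfun : ∀ i : Fin n, edgeFun (conjT f₁ w₁) w₁ σ₁ i = edgeFun (conjT f₂ w₂) w₂ σ₂ i := by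
        intro i
        have h1 := List.ofFn_inj.mp heq
        exact congrFun h1 i
      have hfst : ∀ i : Fin n, w₁.succAbove (σ₁ i) = w₂.succAbove (σ₂ i) := by
        intro i
        have := congrArg Prod.fst (hfun i); simpa [edgeFun] using this
      have hw : w₁ = w₂ := by
        by_contra hne
        obtain ⟨j, hj⟩ := Fin.exists_succAbove_eq (Ne.symm hne)
        have := hfst (σ₁.symm j)
        rw [Equiv.apply_symm_apply, hj] at this
        exact Fin.succAbove_ne w₂ (σ₂ (σ₁.symm j)) this.symm
      subst hw
      have hσ : σ₁ = σ₂ := by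
        apply Equiv.ext
        intro i
        exact Fin.succAbove_right_injective (hfst i)
      subst hσ
      have hg : conjT f₁ w₁ = conjT f₂ w₁ := by
        funext v
        by_cases hv : v = w₁
        · rw [hv, conjT_root _ _ h₁.1.2.1, conjT_root _ _ h₂.1.2.1]
        · obtain ⟨j, hj⟩ := Fin.exists_succAbove_eq hv
          have h := congrArg Prod.snd (hfun (σ₁.symm j))
          simp only [edgeFun, Equiv.apply_symm_apply] at h
          rw [hj] at h
          exact h
      have : f₁ = f₂ := by
        rw [← conjT_conjT f₁ w₁, hg, conjT_conjT]
      rw [this]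
  calc (treeF n).card * ((n+1) * (n.factorial))
      = ((treeF n) ×ˢ ((Finset.univ : Finset (Fin (n+1))) ×ˢ
        (Finset.univ : Finset (Equiv.Perm (Fin n))))).card := by
        rw [Finset.card_product, Finset.card_product, Finset.card_univ, Finset.card_univ,
          Fintype.card_fin, Fintype.card_perm, Fintype.card_fin]
    _ ≤ _ := key

theorem prod_range_sub_eq_factorial (n : ℕ) :
    ∏ i ∈ Finset.range n, (n - i) = n.factorial := by
  induction n with
  | zero => simp
  | succ m ih =>
    rw [Finset.prod_range_succ']
    simp only [Nat.sub_zero]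
    have h : ∀ i ∈ Finset.range m, m + 1 - (i + 1) = m - i := by intro i _; omega
    rw [Finset.prod_congr rfl h, ih, Nat.factorial_succ, mul_comm]

theorem card_treeF_le (n : ℕ) (hn : 1 ≤ n) : (treeF n).card ≤ (n+1) ^ (n - 1) := by
  have h1 := card_treeF_mul_le n
  have h2 := card_validF_le (n := n) n
  have h3 : ∏ i ∈ Finset.range n, ((n+1) * ((n+1) - i - 1)) = (n+1)^n * n.factorial := by
    rw [Finset.prod_mul_distrib, Finset.prod_const, Finset.card_range]
    congr 1
    have : ∀ i ∈ Finset.range n, (n+1) - i - 1 = n - i := by intro i _; omega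
    rw [Finset.prod_congr rfl this, prod_range_sub_eq_factorial]
  have h4 : (treeF n).card * ((n+1) * n.factorial) ≤ (n+1)^n * n.factorial :=
    le_trans h1 (h3 ▸ h2)
  have h5 : (n+1)^n = (n+1)^(n-1) * (n+1) := by
    rw [← pow_succ]
    congr 1
    omega
  rw [h5] at h4
  have h6 : (treeF n).card * ((n+1) * n.factorial) = (treeF n).card * (n+1) * n.factorial := by
    ring
  rw [h6] at h4
  have h7 : (treeF n).card * (n+1) ≤ (n+1)^(n-1) * (n+1) :=
    Nat.le_of_mul_le_mul_right h4 (Nat.factorial_pos n)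
  exact Nat.le_of_mul_le_mul_right h7 (Nat.succ_pos n)

/-- a partial spanning tree on a vertex set `J` -/
def TreeOn (rel : Fin (n+1) → Fin (n+1) → Prop) (J : Finset (Fin (n+1)))
    (f : Fin (n+1) → Fin (n+1)) : Prop :=
  f 0 = 0 ∧ (∀ v ∈ J, v ≠ 0 → rel v (f v) ∧ f v ∈ J) ∧ (∀ v ∈ J, ∃ k, f^[k] v = 0)

theorem exists_tree_of_connected (rel : Fin (n+1) → Fin (n+1) → Prop)
    (hsymm : ∀ a b, rel a b → rel b a)
    (hconn : ∀ J : Finset (Fin (n+1)), 0 ∈ J → J ≠ Finset.univ →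
      ∃ v ∈ J, ∃ w, w ∉ J ∧ rel v w) :
    ∃ f : Fin (n+1) → Fin (n+1), f 0 = 0 ∧ (∀ v, v ≠ 0 → rel v (f v)) ∧
      ∀ v, ∃ k, f^[k] v = 0 := by
  have claim : ∀ m : ℕ, ∀ J : Finset (Fin (n+1)), 0 ∈ J → n + 1 ≤ J.card + m →
      (∃ f, TreeOn rel J f) → ∃ f, TreeOn rel Finset.univ f := by
    intro m
    induction m with
    | zero =>
      intro J h0 hcard hf
      have : J = Finset.univ := by
        apply Finset.eq_univ_of_card
        have := Finset.card_le_univ J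
        simp only [Fintype.card_fin] at *
        omega
      rwa [this] at hf
    | succ m ih =>
      intro J h0 hcard ⟨f, hf⟩
      by_cases hJ : J = Finset.univ
      · exact ⟨f, hJ ▸ hf⟩
      obtain ⟨v, hvJ, w, hwJ, hrel⟩ := hconn J h0 hJ
      have hw0 : w ≠ 0 := fun h => hwJ (h ▸ h0)
      set f' := Function.update f w v with hf'
      have hff' : ∀ u, u ≠ w → f' u = f u := by
        intro u hu; rw [hf', Function.update_of_ne hu]
      have hf'0 : f' 0 = 0 := by rw [hff' 0 (Ne.symm hw0), hf.1]
      have haux : ∀ k u, u ∈ J → f^[k] u = 0 → f'^[k] u = 0 := by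
        intro k
        induction k with
        | zero => intro u _ h; exact h
        | succ k ihk =>
          intro u huJ hit
          by_cases hu0 : u = 0
          · rw [hu0, Function.iterate_fixed hf'0]
          · have huw : u ≠ w := fun h => hwJ (h ▸ huJ)
            rw [Function.iterate_succ_apply, hff' u huw]
            rw [Function.iterate_succ_apply] at hit
            exact ihk (f u) ((hf.2.1 u huJ hu0).2) hit
      refine ih (insert w J) (Finset.mem_insert_of_mem h0) ?_ ⟨f', hf'0, ?_, ?_⟩
      · rw [Finset.card_insert_of_notMem hwJ]; omega
      · intro u hu hu0
        rcases Finset.mem_insert.mp hu with rfl | huJ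
        · rw [hf', Function.update_self]
          exact ⟨hsymm v u hrel, Finset.mem_insert_of_mem hvJ⟩
        · have huw : u ≠ w := fun h => hwJ (h ▸ huJ)
          rw [hff' u huw]
          exact ⟨(hf.2.1 u huJ hu0).1, Finset.mem_insert_of_mem (hf.2.1 u huJ hu0).2⟩
      · intro u hu
        rcases Finset.mem_insert.mp hu with rfl | huJ
        · obtain ⟨k, hk⟩ := hf.2.2 v hvJ
          refine ⟨k + 1, ?_⟩
          rw [Function.iterate_succ_apply, hf', Function.update_self]
          exact haux k v hvJ hk
        · obtain ⟨k, hk⟩ := hf.2.2 u huJ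
          exact ⟨k, haux k u huJ hk⟩
  have h0 : ∃ f, TreeOn rel {0} f := by
    refine ⟨id, rfl, ?_, ?_⟩
    · intro v hv hv0; simp only [Finset.mem_singleton] at hv; exact absurd hv hv0
    · intro v hv; simp only [Finset.mem_singleton] at hv; exact ⟨0, hv⟩
  obtain ⟨f, hf⟩ := claim n {0} (Finset.mem_singleton_self 0) (by rw [Finset.card_singleton]; omega) h0
  exact ⟨f, hf.1, fun v hv => (hf.2.1 v (Finset.mem_univ v) hv).1,
    fun v => hf.2.2 v (Finset.mem_univ v)⟩

/-- From `sigNorm x ≤ 1`: any vertex-cut admits a crossing pair at distance ≤ 1. -/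
theorem crossing_of_sigNorm {d n : ℕ} {x : Fin n → EuclideanSpace ℝ (Fin d)}
    (hx : sigNorm d n x ≤ 1) (J : Finset (Fin (n+1))) (h0 : 0 ∈ J)
    (hJ : J ≠ Finset.univ) :
    ∃ v ∈ J, ∃ w, w ∉ J ∧
      dist (Fin.cases 0 x v : EuclideanSpace ℝ (Fin d)) (Fin.cases 0 x w) ≤ 1 := by
  classical
  set I : Finset (Fin n) := Finset.univ.filter (fun i => i.succ ∈ J) with hI
  obtain ⟨w₀, hw₀⟩ : ∃ w₀, w₀ ∉ J := by
    by_contra h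
    push_neg at h
    exact hJ (Finset.eq_univ_iff_forall.mpr h)
  have hw₀0 : w₀ ≠ 0 := fun h => hw₀ (h ▸ h0)
  obtain ⟨j₀, hj₀⟩ : ∃ j₀ : Fin n, j₀.succ = w₀ := by
    obtain ⟨j₀, hj₀⟩ := Fin.eq_succ_of_ne_zero hw₀0
    exact ⟨j₀, hj₀.symm⟩
  have hj₀I : j₀ ∉ I := by
    rw [hI]; simp only [Finset.mem_filter, Finset.mem_univ, true_and]
    rw [hj₀]; exact hw₀
  have hIne : I ≠ Finset.univ := fun h => hj₀I (h ▸ Finset.mem_univ j₀)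
  -- the relevant setDist is at most 1
  set r := setDist (insert 0 (x '' ↑I)) (x '' ↑(Iᶜ)) with hr
  have hrS : r ∈ {r | ∃ I' : Finset (Fin n), I' ≠ Finset.univ ∧
      r = setDist (insert 0 (x '' ↑I')) (x '' ↑(I'ᶜ))} := ⟨I, hIne, rfl⟩
  have hfin : {r | ∃ I' : Finset (Fin n), I' ≠ Finset.univ ∧
      r = setDist (insert 0 (x '' ↑I')) (x '' ↑(I'ᶜ))}.Finite := by
    apply Set.Finite.subset (Set.finite_range
      (fun I' : Finset (Fin n) => setDist (insert 0 (x '' ↑I')) (x '' ↑(I'ᶜ))))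
    rintro s ⟨I', _, rfl⟩
    exact ⟨I', rfl⟩
  have hr1 : r ≤ 1 := le_trans (le_csSup hfin.bddAbove hrS) hx
  -- the inf defining setDist is attained
  set D := {s | ∃ a ∈ insert (0 : EuclideanSpace ℝ (Fin d)) (x '' ↑I),
      ∃ b ∈ x '' ↑(Iᶜ), s = dist a b} with hD
  have hDne : D.Nonempty := by
    refine ⟨dist (0 : EuclideanSpace ℝ (Fin d)) (x j₀), 0, Set.mem_insert _ _,
      x j₀, ⟨j₀, ?_, rfl⟩, rfl⟩
    simpa using hj₀I
  have hDfin : D.Finite := by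
    apply Set.Finite.subset (Set.Finite.image (fun p => dist p.1 p.2)
      (Set.Finite.prod (Set.Finite.insert 0 ((I : Set (Fin n)).toFinite.image x))
        (((Iᶜ : Finset (Fin n)) : Set (Fin n)).toFinite.image x)))
    rintro s ⟨a, ha, b, hb, rfl⟩
    exact ⟨(a, b), ⟨ha, hb⟩, rfl⟩
  have hmem : sInf D ∈ D := hDne.csInf_mem hDfin
  have hsInfD : sInf D = r := by rw [hr, setDist]
  obtain ⟨a, ha, b, hb, hab⟩ := hmem
  have hab1 : dist a b ≤ 1 := by rw [← hab, hsInfD]; exact hr1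
  obtain ⟨jb, hjb, rfl⟩ := hb
  have hjbJ : jb.succ ∉ J := by
    simp only [Finset.coe_compl, Set.mem_compl_iff, Finset.mem_coe, hI,
      Finset.mem_filter, Finset.mem_univ, true_and] at hjb
    exact hjb
  rcases Set.mem_insert_iff.mp ha with rfl | ⟨ia, hia, rfl⟩
  · exact ⟨0, h0, jb.succ, hjbJ, by simpa using hab1⟩
  · have hiaJ : ia.succ ∈ J := by
      simp only [Finset.mem_coe, hI, Finset.mem_filter, Finset.mem_univ, true_and] at hia
      exact hia
    exact ⟨ia.succ, hiaJ, jb.succ, hjbJ, by simpa using hab1⟩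

theorem pow_le_exp_mul_factorial (p : ℕ) :
    (p : ℝ) ^ p ≤ Real.exp 1 ^ p * p.factorial := by
  induction p with
  | zero => simp
  | succ p ih =>
    have he1 : (1:ℝ) ≤ Real.exp 1 := by
      have := Real.add_one_le_exp (1:ℝ); linarith
    have hkey : ((p:ℝ) + 1) ^ p ≤ Real.exp 1 * (p:ℝ) ^ p := by
      rcases Nat.eq_zero_or_pos p with rfl | hp
      · simpa using he1
      · have hppos : (0:ℝ) < p := by exact_mod_cast hp
        have h1 : (1 + 1/(p:ℝ)) ≤ Real.exp (1/(p:ℝ)) := by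
          have := Real.add_one_le_exp (1/(p:ℝ)); linarith
        have h2 : (1 + 1/(p:ℝ)) ^ p ≤ Real.exp (1/(p:ℝ)) ^ p :=
          pow_le_pow_left₀ (by positivity) h1 p
        have h3 : Real.exp (1/(p:ℝ)) ^ p = Real.exp 1 := by
          rw [← Real.exp_nat_mul]
          congr 1
          field_simp
        have h4 : ((p:ℝ) + 1) ^ p = (1 + 1/(p:ℝ)) ^ p * (p:ℝ) ^ p := by
          rw [← mul_pow]
          congr 1
          field_simp
        rw [h4, ← h3]
        exact mul_le_mul_of_nonneg_right h2 (by positivity)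
    have hexp : (0:ℝ) < Real.exp 1 := Real.exp_pos 1
    have hfs : ((p+1).factorial : ℝ) = ((p:ℝ)+1) * p.factorial := by
      rw [Nat.factorial_succ]; push_cast; ring
    push_cast
    calc ((p:ℝ)+1) ^ (p+1) = ((p:ℝ)+1) * ((p:ℝ)+1) ^ p := by rw [pow_succ]; ring
      _ ≤ ((p:ℝ)+1) * (Real.exp 1 * (p:ℝ) ^ p) :=
          mul_le_mul_of_nonneg_left hkey (by positivity)
      _ ≤ ((p:ℝ)+1) * (Real.exp 1 * (Real.exp 1 ^ p * p.factorial)) := by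
          apply mul_le_mul_of_nonneg_left _ (by positivity)
          exact mul_le_mul_of_nonneg_left ih hexp.le
      _ = Real.exp 1 ^ (p+1) * (((p:ℝ)+1) * p.factorial) := by ring
      _ = Real.exp 1 ^ (p+1) * ((p+1).factorial) := by rw [hfs]

theorem pow_sub_two_le_exp_factorial (p : ℕ) (hp : 1 ≤ p) :
    (p : ℝ) ^ (p - 2) ≤ Real.exp 1 ^ (p - 1) * p.factorial := by
  rcases Nat.lt_or_ge p 2 with h2 | h2
  · interval_cases p
    · simp
  · have hppos : (0:ℝ) < p := by
      have : (0:ℕ) < p := by omega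
      exact_mod_cast this
    have hsq : (0:ℝ) < (p:ℝ)^2 := by positivity
    have key : (p:ℝ) ^ (p-2) * (p:ℝ)^2 ≤ (Real.exp 1 ^ (p-1) * p.factorial) * (p:ℝ)^2 := by
      have hl : (p:ℝ) ^ (p-2) * (p:ℝ)^2 = (p:ℝ) ^ p := by
        rw [← pow_add]
        congr 1
        omega
      rw [hl]
      refine le_trans (pow_le_exp_mul_factorial p) ?_
      have hexp : Real.exp 1 ^ p = Real.exp 1 ^ (p-1) * Real.exp 1 := by
        rw [← pow_succ]
        congr 1
        omega
      rw [hexp]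
      have hle : Real.exp 1 ≤ (p:ℝ)^2 := by
        have h27 : Real.exp 1 < 2.7182818286 := Real.exp_one_lt_d9
        have hp2 : (2:ℝ) ≤ (p:ℝ) := by exact_mod_cast h2
        nlinarith
      have hfpos : (0:ℝ) < p.factorial := by exact_mod_cast p.factorial_pos
      calc Real.exp 1 ^ (p-1) * Real.exp 1 * p.factorial
          ≤ Real.exp 1 ^ (p-1) * (p:ℝ)^2 * p.factorial := by
            have := mul_le_mul_of_nonneg_left hle (le_of_lt (pow_pos (Real.exp_pos 1) (p-1)))
            nlinarith [pow_pos (Real.exp_pos 1) (p-1)]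
        _ = (Real.exp 1 ^ (p-1) * p.factorial) * (p:ℝ)^2 := by ring
    exact le_of_mul_le_mul_right key hsq

theorem volume_sig_le_treeBound (d n : ℕ) (hd : 1 ≤ d) :
    volume {x : Fin n → EuclideanSpace ℝ (Fin d) | sigNorm d n x ≤ 1}
      ≤ (volume (Metric.ball (0 : EuclideanSpace ℝ (Fin d)) 1)) ^ n
        * (((n+1) ^ (n - 1) : ℕ) : ENNReal) := by
  classical
  rcases Nat.eq_zero_or_pos n with rfl | hn
  · have h1 : volume {x : Fin 0 → EuclideanSpace ℝ (Fin d) | sigNorm d 0 x ≤ 1}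
        ≤ volume (Set.univ : Set (Fin 0 → EuclideanSpace ℝ (Fin d))) :=
      measure_mono (Set.subset_univ _)
    have h2 : volume (Set.univ : Set (Fin 0 → EuclideanSpace ℝ (Fin d))) = 1 := by
      rw [← Set.pi_univ Set.univ, volume_pi_pi]
      simp
    simpa [h2] using h1
  -- covering by spanning trees
  have hcover : {x : Fin n → EuclideanSpace ℝ (Fin d) | sigNorm d n x ≤ 1}
      ⊆ ⋃ f ∈ treeF n, {x : Fin n → EuclideanSpace ℝ (Fin d) |
          ∀ i : Fin n, dist (x i) (Fin.cases 0 x (f i.succ)) ≤ 1} := by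
    intro x hx
    obtain ⟨f, hf0, hrel, hreach⟩ := exists_tree_of_connected
      (fun a b => dist (Fin.cases 0 x a : EuclideanSpace ℝ (Fin d)) (Fin.cases 0 x b) ≤ 1)
      (fun a b h => by rwa [dist_comm] at h)
      (fun J h0 hJ => crossing_of_sigNorm hx J h0 hJ)
    have hfmem : f ∈ treeF n := by
      rw [treeF, Finset.mem_filter]
      exact ⟨Finset.mem_univ _, hf0, hreach⟩
    refine Set.mem_biUnion hfmem ?_
    intro i
    have := hrel i.succ (Fin.succ_ne_zero i)
    simpa using this
  calc volume {x : Fin n → EuclideanSpace ℝ (Fin d) | sigNorm d n x ≤ 1}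
      ≤ volume (⋃ f ∈ treeF n, {x : Fin n → EuclideanSpace ℝ (Fin d) |
          ∀ i : Fin n, dist (x i) (Fin.cases 0 x (f i.succ)) ≤ 1}) := measure_mono hcover
    _ ≤ ∑ f ∈ treeF n, volume {x : Fin n → EuclideanSpace ℝ (Fin d) |
          ∀ i : Fin n, dist (x i) (Fin.cases 0 x (f i.succ)) ≤ 1} :=
        measure_biUnion_finset_le _ _
    _ = ∑ f ∈ treeF n, (volume (Metric.ball (0 : EuclideanSpace ℝ (Fin d)) 1))^n := by
        refine Finset.sum_congr rfl fun f hf => ?_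
        rw [treeF, Finset.mem_filter] at hf
        exact volume_Bset hd f hf.2.1 hf.2.2
    _ = ((treeF n).card : ENNReal) * (volume (Metric.ball (0 : EuclideanSpace ℝ (Fin d)) 1))^n := by
        rw [Finset.sum_const, nsmul_eq_mul]
    _ ≤ (((n+1) ^ (n - 1) : ℕ) : ENNReal)
          * (volume (Metric.ball (0 : EuclideanSpace ℝ (Fin d)) 1))^n := by
        apply mul_le_mul_left
        exact_mod_cast Nat.cast_le.mpr (card_treeF_le n hn)
    _ = _ := mul_comm _ _

/-- The Lebesgue volume of `{x ∈ (ℝ^d)^{p-1} : ‖x‖_sig ≤ 1}` is at most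
`ϑ_d^{p-1} · p^{p-2}`, and in particular at most `(e·ϑ_d)^{p-1} · p!`, where
`ϑ_d` is the volume of the `d`-dimensional unit ball. -/
theorem stmt_10 (d p : ℕ) (hd : 1 ≤ d) (hp : 1 ≤ p) :
    volume {x : Fin (p - 1) → EuclideanSpace ℝ (Fin d) | sigNorm d (p - 1) x ≤ 1}
        ≤ (volume (Metric.ball (0 : EuclideanSpace ℝ (Fin d)) 1)) ^ (p - 1)
            * (p : ENNReal) ^ (p - 2)
      ∧ volume {x : Fin (p - 1) → EuclideanSpace ℝ (Fin d) | sigNorm d (p - 1) x ≤ 1}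
        ≤ (ENNReal.ofReal (Real.exp 1)
            * volume (Metric.ball (0 : EuclideanSpace ℝ (Fin d)) 1)) ^ (p - 1)
            * (p.factorial : ENNReal) := by
  obtain ⟨n, rfl⟩ : ∃ n, p = n + 1 := ⟨p - 1, by omega⟩
  have hn1 : n + 1 - 1 = n := by omega
  have hn2 : n + 1 - 2 = n - 1 := by omega
  rw [hn1, hn2]
  set ϑ := volume (Metric.ball (0 : EuclideanSpace ℝ (Fin d)) 1) with hϑ
  have key := volume_sig_le_treeBound d n hd
  have goal1 : volume {x : Fin n → EuclideanSpace ℝ (Fin d) | sigNorm d n x ≤ 1}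
      ≤ ϑ ^ n * ((n+1) : ENNReal) ^ (n - 1) := by
    refine le_trans key ?_
    apply le_of_eq
    congr 1
    push_cast
    ring
  refine ⟨by exact_mod_cast goal1, ?_⟩
  -- second bound
  have hreal : ((n+1) : ℝ) ^ (n - 1) ≤ Real.exp 1 ^ n * (n+1).factorial := by
    have := pow_sub_two_le_exp_factorial (n+1) (by omega)
    rw [hn1, hn2] at this
    exact_mod_cast this
  have hcast : ((n+1) : ENNReal) ^ (n - 1)
      ≤ (ENNReal.ofReal (Real.exp 1)) ^ n * ((n+1).factorial : ENNReal) := by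
    have h1 : ((n+1) : ENNReal) ^ (n - 1) = ENNReal.ofReal (((n+1) : ℝ) ^ (n - 1)) := by
      rw [ENNReal.ofReal_pow (by positivity)]
      congr 1
      rw [show ((n:ℝ)+1) = ((n+1 : ℕ) : ℝ) by push_cast; ring, ENNReal.ofReal_natCast]
      push_cast
      ring
    have h2 : (ENNReal.ofReal (Real.exp 1)) ^ n * ((n+1).factorial : ENNReal)
        = ENNReal.ofReal (Real.exp 1 ^ n * (n+1).factorial) := by
      rw [ENNReal.ofReal_mul (by positivity), ENNReal.ofReal_pow (Real.exp_pos 1).le,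
        ENNReal.ofReal_natCast]
    rw [h1, h2]
    exact ENNReal.ofReal_le_ofReal hreal
  calc volume {x : Fin n → EuclideanSpace ℝ (Fin d) | sigNorm d n x ≤ 1}
      ≤ ϑ ^ n * ((n+1) : ENNReal) ^ (n - 1) := goal1
    _ ≤ ϑ ^ n * ((ENNReal.ofReal (Real.exp 1)) ^ n * ((n+1).factorial : ENNReal)) :=
        mul_le_mul_right hcast _
    _ = (ENNReal.ofReal (Real.exp 1) * ϑ) ^ n * ((n+1).factorial : ENNReal) := by
        rw [mul_pow]
        ring
end

section
/- Let (m_I)_{I ⊆ {1,…,p}} be real numbers, define cumulants κ_I = Σ_{Π∈Q(I)} (−1)^{|Π|−1}(|Π|−1)! Π_{π∈Π} m_π and clusters δ_{I,J} = m_{I∪J} − m_I m_J for disjoint I,J. Then for any nonempty proper subset I of {1,…,p} with 1 ∈ I, κ_{{1,…,p}} = Σ_{Π ≺ {I,I^c}} Σ_{τ∈S_{|Π|}, τ(1)=1} (−1)^{|Π|+|D(Π,τ)|−1} Π_{(σ1,σ2)∈D(Π,τ)} δ_{σ1,σ2} · Π_{σ∈M(Π,τ)} m_σ, where D(Π,τ)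 is the set of pairs of consecutive (under the ordering τ) blocks with the first contained in I and the second in I^c, M(Π,τ) is the set of blocks not involved in any such pair, and moreover D(Π,τ) is always nonempty. -/
open Finset

/-- The ordered list of blocks of a set partition `P` determined by an
enumeration `f` of its blocks. -/
def ospList {p : ℕ} (P : Finpartition (Finset.univ : Finset (Fin p)))
    (f : Fin P.parts.card ≃ {π // π ∈ P.parts}) : List (Finset (Fin p)) :=
  List.ofFn (fun i => ((f i : {π // π ∈ P.parts}) : Finset (Fin p)))

/-- `D(Π,τ)`: the pairs of consecutive blocks, the first contained in `I`
and the second in `I^c`. -/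
def Dlist {p : ℕ} (I : Finset (Fin p)) (L : List (Finset (Fin p))) :
    List (Finset (Fin p) × Finset (Fin p)) :=
  (L.zip L.tail).filter (fun q => decide (q.1 ⊆ I ∧ q.2 ⊆ Iᶜ))

/-- `M(Π,τ)`: the blocks not involved in any pair of `D(Π,τ)`. -/
def Mlist {p : ℕ} (I : Finset (Fin p)) (L : List (Finset (Fin p))) :
    List (Finset (Fin p)) :=
  L.filter (fun σ =>
    decide (σ ∉ (Dlist I L).map Prod.fst ∧ σ ∉ (Dlist I L).map Prod.snd))

namespace Stmt16
variable {p : ℕ} (I : Finset (Fin p))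
local notation "F" => Finset (Fin p)

lemma Dlist_nil : Dlist I ([] : List F) = [] := rfl
lemma Dlist_single (a : F) : Dlist I [a] = [] := rfl

lemma Dlist_cons_cons (a b : F) (l : List F) :
    Dlist I (a :: b :: l) =
      (if a ⊆ I ∧ b ⊆ Iᶜ then [(a, b)] else []) ++ Dlist I (b :: l) := by
  simp only [Dlist, List.tail_cons, List.zip_cons_cons, List.filter_cons]
  by_cases h : a ⊆ I ∧ b ⊆ Iᶜ <;> simp [h]

lemma mem_Dlist {q : F × F} {L : List F} (h : q ∈ Dlist I L) :
    q.1 ∈ L ∧ q.2 ∈ L ∧ q.1 ⊆ I ∧ q.2 ⊆ Iᶜ := by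
  simp only [Dlist, List.mem_filter, decide_eq_true_eq] at h
  obtain ⟨hz, h1, h2⟩ := h
  obtain ⟨m1, m2⟩ := List.of_mem_zip hz
  exact ⟨m1, List.mem_of_mem_tail m2, h1, h2⟩

lemma mem_Dlist_cons {q : F × F} {a : F} {l : List F} (h : q ∈ Dlist I l) :
    q ∈ Dlist I (a :: l) := by
  cases l with
  | nil => simp [Dlist_nil] at h
  | cons b l' =>
    rw [Dlist_cons_cons]
    exact List.mem_append_right _ h

lemma not_subset_of_subset_compl {b : F} (hb : b.Nonempty) (h : b ⊆ Iᶜ) : ¬ b ⊆ I := by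
  obtain ⟨x, hx⟩ := hb
  intro h'
  exact (Finset.mem_compl.1 (h hx)) (h' hx)

lemma not_subset_compl_of_subset {b : F} (hb : b.Nonempty) (h : b ⊆ I) : ¬ b ⊆ Iᶜ := by
  obtain ⟨x, hx⟩ := hb
  intro h'
  exact (Finset.mem_compl.1 (h' hx)) (h hx)

lemma Dlist_cons_of_not_subset {b : F} (l : List F) (h : ¬ b ⊆ I) :
    Dlist I (b :: l) = Dlist I l := by
  cases l with
  | nil => rfl
  | cons c t =>
    rw [Dlist_cons_cons, if_neg (fun hc => h hc.1), List.nil_append]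

lemma nodup_zip_tail : ∀ {L : List F}, L.Nodup → (L.zip L.tail).Nodup
  | [], _ => by simp
  | [a], _ => by simp
  | a :: b :: l, h => by
    simp only [List.tail_cons, List.zip_cons_cons]
    refine List.nodup_cons.2 ⟨fun hmem => ?_, ?_⟩
    · exact (List.nodup_cons.1 h).1 (List.of_mem_zip hmem).1
    · exact nodup_zip_tail (List.nodup_cons.1 h).2

lemma Dlist_nodup {L : List F} (h : L.Nodup) : (Dlist I L).Nodup :=
  (nodup_zip_tail h).filter _

lemma Dlist_length_le {L : List F} : (Dlist I L).length ≤ L.length - 1 := by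
  refine le_trans (List.length_filter_le _ _) ?_
  simp [List.length_zip]

/-- `splitL` splits each block crossing `I` into its `I`-part and `Iᶜ`-part. -/
def splitL : List F → List F
  | [] => []
  | σ :: l =>
    if σ ⊆ I ∨ σ ⊆ Iᶜ then σ :: splitL l else (σ ∩ I) :: (σ ∩ Iᶜ) :: splitL l

/-- The list of pairs arising from splitting crossing blocks. -/
def crossList (L : List F) : List (F × F) :=
  (L.filter (fun σ => decide (¬ (σ ⊆ I ∨ σ ⊆ Iᶜ)))).map (fun σ => (σ ∩ I, σ ∩ Iᶜ))

@[simp] lemma splitL_nil : splitL I ([] : List F) = [] := rfl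

lemma splitL_cons_of_pos {σ : F} (l : List F) (h : σ ⊆ I ∨ σ ⊆ Iᶜ) :
    splitL I (σ :: l) = σ :: splitL I l := by simp [splitL, h]

lemma splitL_cons_of_neg {σ : F} (l : List F) (h : ¬ (σ ⊆ I ∨ σ ⊆ Iᶜ)) :
    splitL I (σ :: l) = (σ ∩ I) :: (σ ∩ Iᶜ) :: splitL I l := by simp [splitL, h]

@[simp] lemma crossList_nil : crossList I ([] : List F) = [] := rfl

lemma crossList_cons_of_pos {σ : F} (l : List F) (h : σ ⊆ I ∨ σ ⊆ Iᶜ) :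
    crossList I (σ :: l) = crossList I l := by
  have h' : ¬(¬σ ⊆ I ∧ ¬σ ⊆ Iᶜ) := by tauto
  simp [crossList, List.filter_cons, h']

lemma crossList_cons_of_neg {σ : F} (l : List F) (h : ¬ (σ ⊆ I ∨ σ ⊆ Iᶜ)) :
    crossList I (σ :: l) = (σ ∩ I, σ ∩ Iᶜ) :: crossList I l := by
  have h' : ¬σ ⊆ I ∧ ¬σ ⊆ Iᶜ := by tauto
  simp [crossList, List.filter_cons, h']

lemma mem_crossList {q : F × F} {L : List F} (h : q ∈ crossList I L) :
    ∃ σ ∈ L, ¬ (σ ⊆ I ∨ σ ⊆ Iᶜ) ∧ q = (σ ∩ I, σ ∩ Iᶜ) := by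
  simp only [crossList, List.mem_map, List.mem_filter, decide_eq_true_eq] at h
  obtain ⟨σ, ⟨hσ, hc⟩, rfl⟩ := h
  exact ⟨σ, hσ, hc, rfl⟩

lemma splitL_eq_nil_iff {L : List F} : splitL I L = [] ↔ L = [] := by
  cases L with
  | nil => simp
  | cons σ l =>
    constructor
    · intro h
      by_cases hc : σ ⊆ I ∨ σ ⊆ Iᶜ
      · rw [splitL_cons_of_pos I l hc] at h; simp at h
      · rw [splitL_cons_of_neg I l hc] at h; simp at h
    · intro h; simp at h

lemma mem_splitL : ∀ {L : List F} {τ : F}, τ ∈ splitL I L → ∃ σ ∈ L, τ ⊆ σ := by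
  intro L
  induction L with
  | nil => simp
  | cons σ l ih =>
    intro τ hτ
    by_cases hc : σ ⊆ I ∨ σ ⊆ Iᶜ
    · rw [splitL_cons_of_pos I l hc] at hτ
      rcases List.mem_cons.1 hτ with rfl | hτ
      · exact ⟨τ, by simp, subset_rfl⟩
      · obtain ⟨σ', hσ', hsub⟩ := ih hτ
        exact ⟨σ', List.mem_cons_of_mem _ hσ', hsub⟩
    · rw [splitL_cons_of_neg I l hc] at hτ
      rcases List.mem_cons.1 hτ with rfl | hτ
      · exact ⟨σ, by simp, inter_subset_left⟩
      · rcases List.mem_cons.1 hτ with rfl | hτ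
        · exact ⟨σ, by simp, inter_subset_left⟩
        · obtain ⟨σ', hσ', hsub⟩ := ih hτ
          exact ⟨σ', List.mem_cons_of_mem _ hσ', hsub⟩

lemma inter_union_inter_compl (σ : F) : σ ∩ I ∪ σ ∩ Iᶜ = σ := by
  ext x
  simp only [mem_union, mem_inter, Finset.mem_compl]
  tauto

lemma nonempty_inter_of_not_subset_compl {σ : F} (h : ¬ σ ⊆ Iᶜ) : (σ ∩ I).Nonempty := by
  obtain ⟨x, hx, hx'⟩ := Finset.not_subset.1 h
  exact ⟨x, mem_inter.2 ⟨hx, by simpa using hx'⟩⟩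

lemma nonempty_inter_compl_of_not_subset {σ : F} (h : ¬ σ ⊆ I) : (σ ∩ Iᶜ).Nonempty := by
  obtain ⟨x, hx, hx'⟩ := Finset.not_subset.1 h
  exact ⟨x, mem_inter.2 ⟨hx, Finset.mem_compl.2 hx'⟩⟩


def unL (L : List (Finset (Fin p))) : Finset (Fin p) := L.foldr (· ∪ ·) ∅

@[simp] lemma unL_nil : unL ([] : List F) = ∅ := rfl
@[simp] lemma unL_cons (a : F) (l : List F) : unL (a :: l) = a ∪ unL l := rfl

def mergeL : List F → Finset (F × F) → List F
  | [], _ => []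
  | [a], _ => [a]
  | a :: b :: l, S =>
    if (a, b) ∈ S then (a ∪ b) :: mergeL l S else a :: mergeL (b :: l) S

lemma mergeL_congr : ∀ (L : List F) {S S' : Finset (F × F)},
    (∀ q : F × F, q.1 ∈ L → (q ∈ S ↔ q ∈ S')) → mergeL L S = mergeL L S'
  | [], _, _, _ => rfl
  | [a], _, _, _ => rfl
  | a :: b :: l, S, S', h => by
    simp only [mergeL]
    by_cases hab : (a, b) ∈ S
    · rw [if_pos hab, if_pos ((h (a, b) (by simp)).1 hab),
        mergeL_congr l (fun q hq => h q (List.mem_cons_of_mem a (List.mem_cons_of_mem b hq)))]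
    · rw [if_neg hab, if_neg (fun hx => hab ((h (a, b) (by simp)).2 hx)),
        mergeL_congr (b :: l) (fun q hq => h q (List.mem_cons_of_mem a hq))]

lemma mem_mergeL_subset : ∀ (L : List F) (S : Finset (F × F)) {σ : F},
    σ ∈ mergeL L S → σ ⊆ unL L
  | [], S, σ => by simp [mergeL]
  | [a], S, σ => by
    simp only [mergeL, List.mem_singleton, unL_cons]
    rintro rfl; exact subset_union_left
  | a :: b :: l, S, σ => by
    simp only [mergeL]
    by_cases hab : (a, b) ∈ S <;> simp only [hab, if_true, if_false, List.mem_cons, unL_cons]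
    · rintro (rfl | h)
      · exact union_subset subset_union_left
          (subset_union_left.trans subset_union_right)
      · exact (mem_mergeL_subset l S h).trans
          (subset_union_right.trans subset_union_right)
    · rintro (rfl | h)
      · exact subset_union_left
      · exact (mem_mergeL_subset (b :: l) S h).trans subset_union_right

lemma mergeL_unL : ∀ (L : List F) (S : Finset (F × F)), unL (mergeL L S) = unL L
  | [], S => rfl
  | [a], S => rfl
  | a :: b :: l, S => by
    simp only [mergeL]
    by_cases hab : (a, b) ∈ S
    · rw [if_pos hab]
      simp only [unL_cons, mergeL_unL l S, union_assoc]
    · rw [if_neg hab]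
      simp only [unL_cons, mergeL_unL (b :: l) S]

lemma disjoint_unL_iff {c : F} {l : List F} :
    Disjoint c (unL l) ↔ ∀ x ∈ l, Disjoint c x := by
  induction l with
  | nil => simp
  | cons a l ih => simp [disjoint_union_right, ih]

lemma mergeL_pairwise : ∀ (L : List F) (S : Finset (F × F)),
    L.Pairwise Disjoint → (mergeL L S).Pairwise Disjoint
  | [], S, _ => by simp [mergeL]
  | [a], S, _ => by simp [mergeL]
  | a :: b :: l, S, h => by
    have ha : ∀ x ∈ b :: l, Disjoint a x := fun x hx => (List.pairwise_cons.1 h).1 x hx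
    have h' := (List.pairwise_cons.1 h).2
    have hb : ∀ x ∈ l, Disjoint b x := fun x hx => (List.pairwise_cons.1 h').1 x hx
    simp only [mergeL]
    by_cases hab : (a, b) ∈ S
    · rw [if_pos hab]
      refine List.pairwise_cons.2 ⟨fun τ hτ => ?_, mergeL_pairwise l S (List.pairwise_cons.1 h').2⟩
      have hτU : τ ⊆ unL l := mem_mergeL_subset l S hτ
      refine disjoint_union_left.2 ⟨?_, ?_⟩
      · exact (disjoint_unL_iff.2 (fun x hx => ha x (List.mem_cons_of_mem _ hx))).mono_right hτU
      · exact (disjoint_unL_iff.2 hb).mono_right hτU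
    · rw [if_neg hab]
      refine List.pairwise_cons.2 ⟨fun τ hτ => ?_, mergeL_pairwise (b :: l) S h'⟩
      have hτU : τ ⊆ unL (b :: l) := mem_mergeL_subset (b :: l) S hτ
      exact (disjoint_unL_iff.2 ha).mono_right hτU

lemma mergeL_nonempty : ∀ (L : List F) (S : Finset (F × F)),
    (∀ σ ∈ L, σ.Nonempty) → ∀ σ ∈ mergeL L S, σ.Nonempty
  | [], S, _ => by simp [mergeL]
  | [a], S, h => by simpa [mergeL] using h
  | a :: b :: l, S, h => by
    simp only [mergeL]
    by_cases hab : (a, b) ∈ S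
    · rw [if_pos hab]
      rintro σ hσ
      rcases List.mem_cons.1 hσ with rfl | hσ
      · exact (h _ (by simp)).mono subset_union_left
      · exact mergeL_nonempty l S (fun x hx => h x (by simp [hx])) σ hσ
    · rw [if_neg hab]
      rintro σ hσ
      rcases List.mem_cons.1 hσ with rfl | hσ
      · exact h _ (by simp)
      · exact mergeL_nonempty (b :: l) S
          (fun x hx => h x (List.mem_cons_of_mem _ hx)) σ hσ

lemma mergeL_ne_nil {L : List F} (S : Finset (F × F)) (h : L ≠ []) : mergeL L S ≠ [] := by
  match L with
  | [a] => simp [mergeL]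
  | a :: b :: l =>
    simp only [mergeL]
    by_cases hab : (a, b) ∈ S <;> simp [hab]

lemma mergeL_headI {L : List F} (S : Finset (F × F)) (h : L ≠ []) :
    L.headI ⊆ (mergeL L S).headI := by
  match L with
  | [a] => simp [mergeL]
  | a :: b :: l =>
    simp only [mergeL]
    by_cases hab : (a, b) ∈ S <;> simp [hab]


lemma nodup_of_pairwise_disjoint {L : List F} (hne : ∀ σ ∈ L, σ.Nonempty)
    (hd : L.Pairwise Disjoint) : L.Nodup := by
  refine hd.imp_of_mem ?_
  intro a b ha _ hab
  intro h
  subst h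
  exact (hne a ha).ne_empty (disjoint_self.1 hab)

lemma splitL_pairwise {L : List F} (hd : L.Pairwise Disjoint) :
    (splitL I L).Pairwise Disjoint := by
  induction L with
  | nil => simp
  | cons σ l ih =>
    have hσl : ∀ x ∈ l, Disjoint σ x := fun x hx => (List.pairwise_cons.1 hd).1 x hx
    have ih' := ih (List.pairwise_cons.1 hd).2
    have hpieces : ∀ τ ∈ splitL I l, ∀ c : F, c ⊆ σ → Disjoint c τ := by
      intro τ hτ c hc
      obtain ⟨σ', hσ', hsub⟩ := mem_splitL I hτ
      exact ((hσl σ' hσ').mono hc hsub)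
    by_cases hc : σ ⊆ I ∨ σ ⊆ Iᶜ
    · rw [splitL_cons_of_pos I l hc]
      exact List.pairwise_cons.2 ⟨fun τ hτ => hpieces τ hτ σ subset_rfl, ih'⟩
    · rw [splitL_cons_of_neg I l hc]
      refine List.pairwise_cons.2 ⟨?_, List.pairwise_cons.2
        ⟨fun τ hτ => hpieces τ hτ _ inter_subset_left, ih'⟩⟩
      intro τ hτ
      rcases List.mem_cons.1 hτ with rfl | hτ
      · exact Finset.disjoint_left.2 (fun x hx1 hx2 =>
          (Finset.mem_compl.1 (mem_inter.1 hx2).2) (mem_inter.1 hx1).2)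
      · exact hpieces τ hτ _ inter_subset_left

lemma splitL_nonempty {L : List F} (hne : ∀ σ ∈ L, σ.Nonempty) :
    ∀ τ ∈ splitL I L, τ.Nonempty := by
  induction L with
  | nil => simp
  | cons σ l ih =>
    have ih' := ih (fun x hx => hne x (List.mem_cons_of_mem _ hx))
    by_cases hc : σ ⊆ I ∨ σ ⊆ Iᶜ
    · rw [splitL_cons_of_pos I l hc]
      rintro τ hτ
      rcases List.mem_cons.1 hτ with rfl | hτ
      · exact hne τ (by simp)
      · exact ih' τ hτ
    · rw [splitL_cons_of_neg I l hc]
      push_neg at hc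
      rintro τ hτ
      rcases List.mem_cons.1 hτ with rfl | hτ
      · exact nonempty_inter_of_not_subset_compl I hc.2
      · rcases List.mem_cons.1 hτ with rfl | hτ
        · exact nonempty_inter_compl_of_not_subset I hc.1
        · exact ih' τ hτ

lemma splitL_unL (L : List F) : unL (splitL I L) = unL L := by
  induction L with
  | nil => simp
  | cons σ l ih =>
    by_cases hc : σ ⊆ I ∨ σ ⊆ Iᶜ
    · rw [splitL_cons_of_pos I l hc, unL_cons, unL_cons, ih]
    · rw [splitL_cons_of_neg I l hc, unL_cons, unL_cons, unL_cons, ih,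
        ← union_assoc, inter_union_inter_compl]

lemma splitL_refines (L : List F) : ∀ τ ∈ splitL I L, τ ⊆ I ∨ τ ⊆ Iᶜ := by
  induction L with
  | nil => simp
  | cons σ l ih =>
    by_cases hc : σ ⊆ I ∨ σ ⊆ Iᶜ
    · rw [splitL_cons_of_pos I l hc]
      rintro τ hτ
      rcases List.mem_cons.1 hτ with rfl | hτ
      · exact hc
      · exact ih τ hτ
    · rw [splitL_cons_of_neg I l hc]
      rintro τ hτ
      rcases List.mem_cons.1 hτ with rfl | hτ
      · exact Or.inl inter_subset_right
      · rcases List.mem_cons.1 hτ with rfl | hτ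
        · exact Or.inr inter_subset_right
        · exact ih τ hτ

lemma splitL_headI {L : List F} {z : Fin p} (hz : z ∈ I) (h : z ∈ L.headI) :
    z ∈ (splitL I L).headI := by
  cases L with
  | nil =>
    simp only [List.headI] at h
    exact absurd h (Finset.notMem_empty z)
  | cons σ l =>
    by_cases hc : σ ⊆ I ∨ σ ⊆ Iᶜ
    · rw [splitL_cons_of_pos I l hc]; exact h
    · rw [splitL_cons_of_neg I l hc]
      exact mem_inter.2 ⟨h, hz⟩

lemma crossList_subset_Dlist (L : List F) :
    ∀ q ∈ crossList I L, q ∈ Dlist I (splitL I L) := by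
  induction L with
  | nil => simp
  | cons σ l ih =>
    by_cases hc : σ ⊆ I ∨ σ ⊆ Iᶜ
    · rw [crossList_cons_of_pos I l hc, splitL_cons_of_pos I l hc]
      exact fun q hq => mem_Dlist_cons I (ih q hq)
    · rw [crossList_cons_of_neg I l hc, splitL_cons_of_neg I l hc]
      rintro q hq
      rcases List.mem_cons.1 hq with rfl | hq
      · rw [Dlist_cons_cons, if_pos ⟨inter_subset_right, inter_subset_right⟩]
        simp
      · exact mem_Dlist_cons I (mem_Dlist_cons I (ih q hq))

lemma mergeL_splitL : ∀ (L : List F), (∀ σ ∈ L, σ.Nonempty) → L.Pairwise Disjoint →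
    mergeL (splitL I L) (crossList I L).toFinset = L := by
  intro L
  induction L with
  | nil => simp [mergeL]
  | cons σ l ih =>
    intro hne hd
    have hne' : ∀ x ∈ l, x.Nonempty := fun x hx => hne x (List.mem_cons_of_mem _ hx)
    have hd' := (List.pairwise_cons.1 hd).2
    have hσl : ∀ x ∈ l, Disjoint σ x := (List.pairwise_cons.1 hd).1
    by_cases hc : σ ⊆ I ∨ σ ⊆ Iᶜ
    · rw [splitL_cons_of_pos I l hc, crossList_cons_of_pos I l hc]
      rcases hsl : splitL I l with _ | ⟨τ, t⟩
      · have hl : l = [] := (splitL_eq_nil_iff I).1 hsl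
        subst hl
        simp [mergeL]
      · have hτS : (σ, τ) ∉ (crossList I l).toFinset := by
          intro hmem
          rw [List.mem_toFinset] at hmem
          obtain ⟨β, hβ, hcross, heq⟩ := mem_crossList I hmem
          have h1 : σ = β ∩ I := (Prod.ext_iff.1 heq).1
          have h2 : σ ⊆ β := h1 ▸ (inter_subset_left : β ∩ I ⊆ β)
          exact (hne σ (by simp)).ne_empty ((hσl β hβ).eq_bot_of_le h2)
        simp only [mergeL]
        rw [if_neg hτS, ← hsl, ih hne' hd']
    · rw [splitL_cons_of_neg I l hc, crossList_cons_of_neg I l hc]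
      have hmem : (σ ∩ I, σ ∩ Iᶜ) ∈ ((σ ∩ I, σ ∩ Iᶜ) :: crossList I l).toFinset := by simp
      rcases hsl : splitL I l with _ | ⟨τ, t⟩
      · have hl : l = [] := (splitL_eq_nil_iff I).1 hsl
        subst hl
        simp only [splitL_nil, crossList_nil, mergeL]
        simp [inter_union_inter_compl]
      · simp only [mergeL]
        rw [if_pos hmem, inter_union_inter_compl]
        have hcongr : mergeL (τ :: t) ((( σ ∩ I, σ ∩ Iᶜ) :: crossList I l).toFinset)
            = mergeL (τ :: t) (crossList I l).toFinset := by
          refine mergeL_congr (τ :: t) (fun q hq => ?_)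
          rw [List.toFinset_cons, Finset.mem_insert]
          constructor
          · rintro (heq | h)
            · exfalso
              have hq' : σ ∩ I ∈ splitL I l := by
                rw [hsl]
                rw [heq] at hq
                exact hq
              obtain ⟨β, hβ, hsub⟩ := mem_splitL I hq'
              push_neg at hc
              have hnonempty : (σ ∩ I).Nonempty := nonempty_inter_of_not_subset_compl I hc.2
              have hdisj : Disjoint (σ ∩ I) β := (hσl β hβ).mono_left inter_subset_left
              exact hnonempty.ne_empty (hdisj.eq_bot_of_le hsub)
            · exact h
          · exact fun h => Or.inr h
        rw [hcongr, ← hsl, ih hne' hd']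

lemma splitL_mergeL : ∀ (L : List F) (S : Finset (F × F)),
    (∀ σ ∈ L, σ.Nonempty) → L.Pairwise Disjoint → (∀ σ ∈ L, σ ⊆ I ∨ σ ⊆ Iᶜ) →
    S ⊆ (Dlist I L).toFinset →
    splitL I (mergeL L S) = L ∧ (crossList I (mergeL L S)).toFinset = S
  | [], S, _, _, _, hS => by
    rw [Dlist_nil] at hS
    simp only [List.toFinset_nil, Finset.subset_empty] at hS
    subst hS
    simp [mergeL]
  | [a], S, hne, _, href, hS => by
    rw [Dlist_single] at hS
    simp only [List.toFinset_nil, Finset.subset_empty] at hS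
    subst hS
    have hca : a ⊆ I ∨ a ⊆ Iᶜ := href a (by simp)
    constructor
    · show splitL I [a] = [a]
      rw [splitL_cons_of_pos I [] hca]; rfl
    · show (crossList I [a]).toFinset = ∅
      rw [crossList_cons_of_pos I [] hca]; rfl
  | a :: b :: l, S, hne, hd, href, hS => by
    have hna : a.Nonempty := hne a (by simp)
    have hnb : b.Nonempty := hne b (by simp)
    have hnodup : (a :: b :: l).Nodup := nodup_of_pairwise_disjoint hne hd
    have hal : a ∉ l := fun h => (List.nodup_cons.1 hnodup).1 (List.mem_cons_of_mem _ h)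
    have hab' : a ≠ b := fun h => (List.nodup_cons.1 hnodup).1 (h ▸ List.mem_cons_self)
    have hbl : b ∉ l := (List.nodup_cons.1 (List.nodup_cons.1 hnodup).2).1
    have hd' : (b :: l).Pairwise Disjoint := (List.pairwise_cons.1 hd).2
    have hne' : ∀ x ∈ b :: l, x.Nonempty := fun x hx => hne x (List.mem_cons_of_mem _ hx)
    have href' : ∀ x ∈ b :: l, x ⊆ I ∨ x ⊆ Iᶜ := fun x hx => href x (List.mem_cons_of_mem _ hx)
    by_cases hab : (a, b) ∈ S
    · have habD : (a, b) ∈ Dlist I (a :: b :: l) := List.mem_toFinset.1 (hS hab)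
      obtain ⟨-, -, haI, hbIc⟩ := mem_Dlist I habD
      have hbI : ¬ b ⊆ I := not_subset_of_subset_compl I hnb hbIc
      have hDbl : Dlist I (b :: l) = Dlist I l := Dlist_cons_of_not_subset I l hbI
      have hD : Dlist I (a :: b :: l) = (a, b) :: Dlist I l := by
        rw [Dlist_cons_cons, if_pos ⟨haI, hbIc⟩, hDbl]; rfl
      have hS'sub : S.erase (a, b) ⊆ (Dlist I l).toFinset := by
        intro q hq
        have hqS := hS (Finset.mem_of_mem_erase hq)
        rw [hD, List.toFinset_cons, Finset.mem_insert] at hqS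
        rcases hqS with h1 | h2
        · exact absurd h1 (Finset.ne_of_mem_erase hq)
        · exact h2
      have hcongr : mergeL l S = mergeL l (S.erase (a, b)) := by
        refine mergeL_congr l (fun q hq => ?_)
        rw [Finset.mem_erase]
        constructor
        · intro h
          refine ⟨fun heq => hal ?_, h⟩
          rw [heq] at hq; exact hq
        · exact fun h => h.2
      obtain ⟨ih1, ih2⟩ := splitL_mergeL l (S.erase (a, b))
        (fun x hx => hne x (List.mem_cons_of_mem _ (List.mem_cons_of_mem _ hx)))
        (List.pairwise_cons.1 hd').2
        (fun x hx => href x (List.mem_cons_of_mem _ (List.mem_cons_of_mem _ hx)))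
        hS'sub
      have hmerge : mergeL (a :: b :: l) S = (a ∪ b) :: mergeL l S := by
        simp only [mergeL]; rw [if_pos hab]
      have hcross : ¬ ((a ∪ b) ⊆ I ∨ (a ∪ b) ⊆ Iᶜ) := by
        push_neg
        constructor
        · intro h
          obtain ⟨x, hx⟩ := hnb
          exact (Finset.mem_compl.1 (hbIc hx)) (h (mem_union_right _ hx))
        · intro h
          obtain ⟨x, hx⟩ := hna
          exact (Finset.mem_compl.1 (h (mem_union_left _ hx))) (haI hx)
      have hinterI : (a ∪ b) ∩ I = a := by
        ext x
        simp only [mem_inter, mem_union]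
        constructor
        · rintro ⟨hx | hx, hxI⟩
          · exact hx
          · exact absurd hxI (Finset.mem_compl.1 (hbIc hx))
        · intro hx
          exact ⟨Or.inl hx, haI hx⟩
      have hinterIc : (a ∪ b) ∩ Iᶜ = b := by
        ext x
        simp only [mem_inter, mem_union]
        constructor
        · rintro ⟨hx | hx, hxI⟩
          · exact absurd (haI hx) (Finset.mem_compl.1 hxI)
          · exact hx
        · intro hx
          exact ⟨Or.inr hx, hbIc hx⟩
      constructor
      · rw [hmerge, hcongr, splitL_cons_of_neg I _ hcross, hinterI, hinterIc, ih1]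
      · rw [hmerge, hcongr, crossList_cons_of_neg I _ hcross, hinterI, hinterIc,
          List.toFinset_cons, ih2]
        exact Finset.insert_erase hab
    · have hSsub : S ⊆ (Dlist I (b :: l)).toFinset := by
        intro q hq
        have hqD := hS hq
        rw [Dlist_cons_cons, List.toFinset_append, Finset.mem_union] at hqD
        rcases hqD with h1 | h2
        · exfalso
          by_cases hcd : a ⊆ I ∧ b ⊆ Iᶜ
          · rw [if_pos hcd] at h1
            simp only [List.toFinset_cons, List.toFinset_nil, Finset.mem_insert,
              Finset.notMem_empty, or_false] at h1
            exact hab (h1 ▸ hq)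
          · rw [if_neg hcd] at h1
            simp at h1
        · exact h2
      obtain ⟨ih1, ih2⟩ := splitL_mergeL (b :: l) S hne' hd' href' hSsub
      have hmerge : mergeL (a :: b :: l) S = a :: mergeL (b :: l) S := by
        simp only [mergeL]; rw [if_neg hab]
      have hca : a ⊆ I ∨ a ⊆ Iᶜ := href a (by simp)
      constructor
      · rw [hmerge, splitL_cons_of_pos I _ hca, ih1]
      · rw [hmerge, crossList_cons_of_pos I _ hca, ih2]

lemma Mlist_nil : Mlist I ([] : List F) = [] := rfl

lemma Mlist_single (a : F) : Mlist I [a] = [a] := by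
  simp [Mlist, Dlist_single]

lemma not_mem_map_fst_Dlist {σ : F} {L : List F} (h : σ ∉ L) :
    σ ∉ (Dlist I L).map Prod.fst := by
  intro hmem
  obtain ⟨q, hq, hfst⟩ := List.mem_map.1 hmem
  exact h (hfst ▸ (mem_Dlist I hq).1)

lemma not_mem_map_snd_Dlist {σ : F} {L : List F} (h : σ ∉ L) :
    σ ∉ (Dlist I L).map Prod.snd := by
  intro hmem
  obtain ⟨q, hq, hsnd⟩ := List.mem_map.1 hmem
  exact h (hsnd ▸ (mem_Dlist I hq).2.1)

lemma Mlist_cons_of_D_eq {x : F} {t : List F} (hD : Dlist I (x :: t) = Dlist I t)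
    (hx : x ∉ t) : Mlist I (x :: t) = x :: Mlist I t := by
  simp only [Mlist, hD]
  rw [List.filter_cons_of_pos (by
    simp only [decide_eq_true_eq]
    exact ⟨not_mem_map_fst_Dlist I hx, not_mem_map_snd_Dlist I hx⟩)]

lemma Mlist_cons_cons_pair {a b : F} {l : List F}
    (hD : Dlist I (a :: b :: l) = (a, b) :: Dlist I l)
    (hal : a ∉ l) (hbl : b ∉ l) :
    Mlist I (a :: b :: l) = Mlist I l := by
  simp only [Mlist, hD]
  rw [List.filter_cons_of_neg (by simp), List.filter_cons_of_neg (by simp)]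
  refine List.filter_congr (fun σ hσ => ?_)
  have hσa : σ ≠ a := fun h => hal (h ▸ hσ)
  have hσb : σ ≠ b := fun h => hbl (h ▸ hσ)
  simp only [List.map_cons, List.mem_cons, decide_eq_decide]
  constructor
  · rintro ⟨h1, h2⟩
    exact ⟨fun hm => h1 (Or.inr hm), fun hm => h2 (Or.inr hm)⟩
  · rintro ⟨h1, h2⟩
    refine ⟨fun hm => ?_, fun hm => ?_⟩
    · rcases hm with h | h
      · exact hσa h
      · exact h1 h
    · rcases hm with h | h
      · exact hσb h
      · exact h2 h

lemma mergeL_length : ∀ (L : List F) (S : Finset (F × F)),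
    (∀ σ ∈ L, σ.Nonempty) → L.Pairwise Disjoint → S ⊆ (Dlist I L).toFinset →
    (mergeL L S).length + S.card = L.length
  | [], S, _, _, hS => by
    rw [Dlist_nil] at hS
    simp only [List.toFinset_nil, Finset.subset_empty] at hS
    subst hS
    simp [mergeL]
  | [a], S, _, _, hS => by
    rw [Dlist_single] at hS
    simp only [List.toFinset_nil, Finset.subset_empty] at hS
    subst hS
    simp [mergeL]
  | a :: b :: l, S, hne, hd, hS => by
    have hnb : b.Nonempty := hne b (by simp)
    have hnodup : (a :: b :: l).Nodup := nodup_of_pairwise_disjoint hne hd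
    have hal : a ∉ l := fun h => (List.nodup_cons.1 hnodup).1 (List.mem_cons_of_mem _ h)
    have hd' : (b :: l).Pairwise Disjoint := (List.pairwise_cons.1 hd).2
    have hne' : ∀ x ∈ b :: l, x.Nonempty := fun x hx => hne x (List.mem_cons_of_mem _ hx)
    by_cases hab : (a, b) ∈ S
    · have habD : (a, b) ∈ Dlist I (a :: b :: l) := List.mem_toFinset.1 (hS hab)
      obtain ⟨-, -, haI, hbIc⟩ := mem_Dlist I habD
      have hbI : ¬ b ⊆ I := not_subset_of_subset_compl I hnb hbIc
      have hD : Dlist I (a :: b :: l) = (a, b) :: Dlist I l := by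
        rw [Dlist_cons_cons, if_pos ⟨haI, hbIc⟩, Dlist_cons_of_not_subset I l hbI]; rfl
      have hS'sub : S.erase (a, b) ⊆ (Dlist I l).toFinset := by
        intro q hq
        have hqS := hS (Finset.mem_of_mem_erase hq)
        rw [hD, List.toFinset_cons, Finset.mem_insert] at hqS
        rcases hqS with h1 | h2
        · exact absurd h1 (Finset.ne_of_mem_erase hq)
        · exact h2
      have hcongr : mergeL l S = mergeL l (S.erase (a, b)) := by
        refine mergeL_congr l (fun q hq => ?_)
        rw [Finset.mem_erase]
        exact ⟨fun h => ⟨fun heq => hal (by rw [heq] at hq; exact hq), h⟩, fun h => h.2⟩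
      have hmerge : mergeL (a :: b :: l) S = (a ∪ b) :: mergeL l S := by
        simp only [mergeL]; rw [if_pos hab]
      have ih := mergeL_length l (S.erase (a, b))
        (fun x hx => hne x (List.mem_cons_of_mem _ (List.mem_cons_of_mem _ hx)))
        (List.pairwise_cons.1 hd').2 hS'sub
      have hcard : (S.erase (a, b)).card = S.card - 1 := Finset.card_erase_of_mem hab
      have hpos : 0 < S.card := Finset.card_pos.2 ⟨_, hab⟩
      rw [hmerge, hcongr]
      simp only [List.length_cons]
      omega
    · have hSsub : S ⊆ (Dlist I (b :: l)).toFinset := by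
        intro q hq
        have hqD := hS hq
        rw [Dlist_cons_cons, List.toFinset_append, Finset.mem_union] at hqD
        rcases hqD with h1 | h2
        · exfalso
          by_cases hcd : a ⊆ I ∧ b ⊆ Iᶜ
          · rw [if_pos hcd] at h1
            simp only [List.toFinset_cons, List.toFinset_nil, Finset.mem_insert,
              Finset.notMem_empty, or_false] at h1
            exact hab (h1 ▸ hq)
          · rw [if_neg hcd] at h1
            simp at h1
        · exact h2
      have hmerge : mergeL (a :: b :: l) S = a :: mergeL (b :: l) S := by
        simp only [mergeL]; rw [if_neg hab]
      have ih := mergeL_length (b :: l) S hne' hd' hSsub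
      rw [hmerge]
      simp only [List.length_cons] at *
      omega

lemma insert_sdiff_insert' {q : F × F} {T T' : Finset (F × F)} (hq : q ∉ T) :
    insert q T \ insert q T' = T \ T' := by
  ext x
  simp only [Finset.mem_sdiff, Finset.mem_insert]
  constructor
  · rintro ⟨hx1 | hx1, hx2⟩
    · exact absurd (Or.inl hx1) hx2
    · push_neg at hx2
      exact ⟨hx1, hx2.2⟩
  · rintro ⟨hx1, hx2⟩
    have hxq : x ≠ q := fun h => hq (h ▸ hx1)
    exact ⟨Or.inr hx1, fun h => by
      rcases h with h | h
      · exact hxq h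
      · exact hx2 h⟩

lemma mergeL_prod (m : F → ℝ) : ∀ (L : List F) (S : Finset (F × F)),
    (∀ σ ∈ L, σ.Nonempty) → L.Pairwise Disjoint → S ⊆ (Dlist I L).toFinset →
    ((mergeL L S).map m).prod =
      (∏ s ∈ S, m (s.1 ∪ s.2)) * (∏ s ∈ (Dlist I L).toFinset \ S, m s.1 * m s.2)
        * ((Mlist I L).map m).prod
  | [], S, _, _, hS => by
    rw [Dlist_nil] at hS
    simp only [List.toFinset_nil, Finset.subset_empty] at hS
    subst hS
    simp [mergeL, Mlist_nil, Dlist_nil]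
  | [a], S, _, _, hS => by
    rw [Dlist_single] at hS
    simp only [List.toFinset_nil, Finset.subset_empty] at hS
    subst hS
    simp [mergeL, Mlist_single, Dlist_single]
  | a :: b :: l, S, hne, hd, hS => by
    have hnb : b.Nonempty := hne b (by simp)
    have hnodup : (a :: b :: l).Nodup := nodup_of_pairwise_disjoint hne hd
    have hal : a ∉ l := fun h => (List.nodup_cons.1 hnodup).1 (List.mem_cons_of_mem _ h)
    have hbl : b ∉ l := (List.nodup_cons.1 (List.nodup_cons.1 hnodup).2).1
    have habl : a ∉ b :: l := (List.nodup_cons.1 hnodup).1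
    have hd' : (b :: l).Pairwise Disjoint := (List.pairwise_cons.1 hd).2
    have hne' : ∀ x ∈ b :: l, x.Nonempty := fun x hx => hne x (List.mem_cons_of_mem _ hx)
    have habDl : (a, b) ∉ (Dlist I l).toFinset := by
      intro h
      exact hal (mem_Dlist I (List.mem_toFinset.1 h)).1
    by_cases hab : (a, b) ∈ S
    · have habD : (a, b) ∈ Dlist I (a :: b :: l) := List.mem_toFinset.1 (hS hab)
      obtain ⟨-, -, haI, hbIc⟩ := mem_Dlist I habD
      have hbI : ¬ b ⊆ I := not_subset_of_subset_compl I hnb hbIc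
      have hD : Dlist I (a :: b :: l) = (a, b) :: Dlist I l := by
        rw [Dlist_cons_cons, if_pos ⟨haI, hbIc⟩, Dlist_cons_of_not_subset I l hbI]; rfl
      have hS'sub : S.erase (a, b) ⊆ (Dlist I l).toFinset := by
        intro q hq
        have hqS := hS (Finset.mem_of_mem_erase hq)
        rw [hD, List.toFinset_cons, Finset.mem_insert] at hqS
        rcases hqS with h1 | h2
        · exact absurd h1 (Finset.ne_of_mem_erase hq)
        · exact h2
      have hcongr : mergeL l S = mergeL l (S.erase (a, b)) := by
        refine mergeL_congr l (fun q hq => ?_)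
        rw [Finset.mem_erase]
        exact ⟨fun h => ⟨fun heq => hal (by rw [heq] at hq; exact hq), h⟩, fun h => h.2⟩
      have hmerge : mergeL (a :: b :: l) S = (a ∪ b) :: mergeL l S := by
        simp only [mergeL]; rw [if_pos hab]
      have ih := mergeL_prod m l (S.erase (a, b))
        (fun x hx => hne x (List.mem_cons_of_mem _ (List.mem_cons_of_mem _ hx)))
        (List.pairwise_cons.1 hd').2 hS'sub
      have hScard : S = insert (a, b) (S.erase (a, b)) := (Finset.insert_erase hab).symm
      have hsdiff : (Dlist I (a :: b :: l)).toFinset \ S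
          = (Dlist I l).toFinset \ S.erase (a, b) := by
        rw [hD, List.toFinset_cons]
        nth_rewrite 1 [hScard]
        exact insert_sdiff_insert' habDl
      have hM : Mlist I (a :: b :: l) = Mlist I l := Mlist_cons_cons_pair I hD hal hbl
      rw [hmerge, hcongr, hsdiff, hM]
      simp only [List.map_cons, List.prod_cons, ih]
      rw [← Finset.mul_prod_erase S (fun s => m (s.1 ∪ s.2)) hab]
      ring
    · have hSsub : S ⊆ (Dlist I (b :: l)).toFinset := by
        intro q hq
        have hqD := hS hq
        rw [Dlist_cons_cons, List.toFinset_append, Finset.mem_union] at hqD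
        rcases hqD with h1 | h2
        · exfalso
          by_cases hcd : a ⊆ I ∧ b ⊆ Iᶜ
          · rw [if_pos hcd] at h1
            simp only [List.toFinset_cons, List.toFinset_nil, Finset.mem_insert,
              Finset.notMem_empty, or_false] at h1
            exact hab (h1 ▸ hq)
          · rw [if_neg hcd] at h1
            simp at h1
        · exact h2
      have hmerge : mergeL (a :: b :: l) S = a :: mergeL (b :: l) S := by
        simp only [mergeL]; rw [if_neg hab]
      have ih := mergeL_prod m (b :: l) S hne' hd' hSsub
      by_cases hcd : a ⊆ I ∧ b ⊆ Iᶜ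
      · have hbI : ¬ b ⊆ I := not_subset_of_subset_compl I hnb hcd.2
        have hDbl : Dlist I (b :: l) = Dlist I l := Dlist_cons_of_not_subset I l hbI
        have hD : Dlist I (a :: b :: l) = (a, b) :: Dlist I l := by
          rw [Dlist_cons_cons, if_pos hcd, hDbl]; rfl
        have hM : Mlist I (a :: b :: l) = Mlist I l := Mlist_cons_cons_pair I hD hal hbl
        have hMb : Mlist I (b :: l) = b :: Mlist I l := Mlist_cons_of_D_eq I hDbl hbl
        have hsdiff : (Dlist I (a :: b :: l)).toFinset \ S
            = insert (a, b) ((Dlist I l).toFinset \ S) := by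
          rw [hD, List.toFinset_cons]
          exact Finset.insert_sdiff_of_notMem _ hab
        rw [hmerge, hsdiff, hM]
        simp only [List.map_cons, List.prod_cons, ih, hDbl, hMb]
        rw [Finset.prod_insert (fun h => habDl (Finset.mem_sdiff.1 h).1)]
        ring
      · have hD : Dlist I (a :: b :: l) = Dlist I (b :: l) := by
          rw [Dlist_cons_cons, if_neg hcd, List.nil_append]
        have hM : Mlist I (a :: b :: l) = a :: Mlist I (b :: l) :=
          Mlist_cons_of_D_eq I hD habl
        rw [hmerge, hD, hM]
        simp only [List.map_cons, List.prod_cons, ih]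
        ring

lemma Dlist_ne_nil_of : ∀ (L : List F), (∀ σ ∈ L, σ ⊆ I ∨ σ ⊆ Iᶜ) → L ≠ [] →
    L.headI ⊆ I → (∃ β ∈ L, ¬ β ⊆ I) → Dlist I L ≠ []
  | [], _, h, _, _ => absurd rfl h
  | [a], _, _, ha, hβ => by
    obtain ⟨β, hβm, hβI⟩ := hβ
    rw [List.mem_singleton] at hβm
    subst hβm
    exact absurd ha hβI
  | a :: b :: t, href, _, ha, hβ => by
    simp only [List.headI] at ha
    by_cases hbc : b ⊆ Iᶜ
    · rw [Dlist_cons_cons, if_pos ⟨ha, hbc⟩]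
      simp
    · have hb : b ⊆ I := (href b (by simp)).resolve_right hbc
      obtain ⟨β, hβm, hβI⟩ := hβ
      have hβbt : β ∈ b :: t := by
        rcases List.mem_cons.1 hβm with rfl | h
        · exact absurd ha hβI
        · exact h
      have ih := Dlist_ne_nil_of (b :: t) (fun x hx => href x (List.mem_cons_of_mem _ hx))
        (by simp) hb ⟨β, hβbt, hβI⟩
      rw [Dlist_cons_cons, if_neg (fun h => hbc h.2), List.nil_append]
      exact ih

/-- Predicate: `L` is an ordered set partition of `univ` whose first block contains `z`. -/
def listOP (z : Fin p) (L : List F) : Prop :=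
  (∀ σ ∈ L, σ.Nonempty) ∧ L.Pairwise Disjoint ∧ unL L = Finset.univ ∧ z ∈ L.headI

lemma listOP_ne_nil {z : Fin p} {L : List F} (h : listOP z L) : L ≠ [] := by
  intro hL
  subst hL
  have := h.2.2.2
  simp only [List.headI] at this
  exact absurd this (Finset.notMem_empty z)

lemma listOP_nodup {z : Fin p} {L : List F} (h : listOP z L) : L.Nodup :=
  nodup_of_pairwise_disjoint h.1 h.2.1

section PF

variable {P : Finpartition (Finset.univ : Finset (Fin p))}
  (f : Fin P.parts.card ≃ {π // π ∈ P.parts})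

lemma ospList_length : (ospList P f).length = P.parts.card := by simp [ospList]

lemma mem_ospList {σ : F} : σ ∈ ospList P f ↔ σ ∈ P.parts := by
  simp only [ospList, List.mem_ofFn, Set.mem_range]
  constructor
  · rintro ⟨i, rfl⟩
    exact (f i).2
  · intro h
    exact ⟨f.symm ⟨σ, h⟩, by simp⟩

lemma ospList_nodup : (ospList P f).Nodup := by
  rw [ospList, List.nodup_ofFn]
  exact fun i j h => f.injective (Subtype.ext h)

lemma ospList_toFinset : (ospList P f).toFinset = P.parts := by
  ext σ
  rw [List.mem_toFinset, mem_ospList]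

lemma ospList_pairwise : (ospList P f).Pairwise Disjoint := by
  refine (ospList_nodup f).imp_of_mem ?_
  intro a b ha hb hab
  exact P.supIndep.pairwiseDisjoint ((mem_ospList f).1 ha) ((mem_ospList f).1 hb) hab

lemma unL_eq_sup (L : List F) : unL L = L.toFinset.sup id := by
  induction L with
  | nil => simp
  | cons a l ih => rw [unL_cons, List.toFinset_cons, Finset.sup_insert, ih]; rfl

lemma ospList_unL : unL (ospList P f) = Finset.univ := by
  rw [unL_eq_sup, ospList_toFinset]
  exact P.sup_parts

lemma headI_ofFn {α : Type*} [Inhabited α] {n : ℕ} (g : Fin n → α) (h : 0 < n) :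
    (List.ofFn g).headI = g ⟨0, h⟩ := by
  cases n with
  | zero => omega
  | succ n =>
    rw [List.ofFn_succ]
    rfl

lemma ospList_listOP {z : Fin p}
    (hf : ∀ i, z ∈ ((f i : {π // π ∈ P.parts}) : F) → (i : ℕ) = 0) :
    listOP z (ospList P f) := by
  refine ⟨?_, ospList_pairwise f, ospList_unL f, ?_⟩
  · intro σ hσ
    exact P.nonempty_of_mem_parts ((mem_ospList f).1 hσ)
  · obtain ⟨π₀, hmem, hz⟩ := P.exists_mem (Finset.mem_univ z)
    set i : Fin P.parts.card := f.symm ⟨π₀, hmem⟩ with hi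
    have hzi : z ∈ ((f i : {π // π ∈ P.parts}) : F) := by
      rw [hi, Equiv.apply_symm_apply]
      exact hz
    have hi0 : (i : ℕ) = 0 := hf i hzi
    have hc : 0 < P.parts.card := i.pos
    rw [ospList, headI_ofFn _ hc]
    have : i = ⟨0, hc⟩ := Fin.ext hi0
    rw [← this]
    exact hzi

end PF

section MK

variable {z : Fin p}

/-- The partition determined by an ordered set partition list. -/
def mkPart {L : List F} (h : listOP z L) :
    Finpartition (Finset.univ : Finset (Fin p)) where
  parts := L.toFinset
  supIndep := by
    rw [Finset.supIndep_iff_pairwiseDisjoint]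
    intro a ha b hb hab
    haveI : Std.Symm (α := F) Disjoint := ⟨fun _ _ hd => hd.symm⟩
    exact h.2.1.forall
      (List.mem_toFinset.1 ha) (List.mem_toFinset.1 hb) hab
  sup_parts := by rw [← unL_eq_sup]; exact h.2.2.1
  bot_notMem := by
    intro hbot
    exact (h.1 _ (List.mem_toFinset.1 hbot)).ne_empty rfl

lemma mkPart_parts {L : List F} (h : listOP z L) : (mkPart h).parts = L.toFinset := rfl

lemma mkPart_card {L : List F} (h : listOP z L) : (mkPart h).parts.card = L.length :=
  List.toFinset_card_of_nodup (listOP_nodup h)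

/-- The enumeration of the blocks of `mkPart` given by the list order. -/
noncomputable def mkEquiv {L : List F} (h : listOP z L) :
    Fin (mkPart h).parts.card ≃ {π // π ∈ (mkPart h).parts} :=
  Equiv.ofBijective
    (fun i => ⟨L.get (Fin.cast (mkPart_card h) i),
      List.mem_toFinset.2 (by rw [List.get_eq_getElem]; exact L.getElem_mem _)⟩)
    (by
      rw [Fintype.bijective_iff_injective_and_card]
      constructor
      · intro i j hij
        have h1 : L.get (Fin.cast (mkPart_card h) i) = L.get (Fin.cast (mkPart_card h) j) :=
          Subtype.ext_iff.1 hij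
        have h2 := (List.nodup_iff_injective_get.1 (listOP_nodup h)) h1
        have h3 := congrArg Fin.val h2
        simp only [Fin.coe_cast] at h3
        exact Fin.ext h3
      · simp [Fintype.card_coe])

lemma mkEquiv_val {L : List F} (h : listOP z L) (i : Fin (mkPart h).parts.card) :
    ((mkEquiv h i : {π // π ∈ (mkPart h).parts}) : F) = L.get (Fin.cast (mkPart_card h) i) :=
  rfl

lemma ospList_mk {L : List F} (h : listOP z L) :
    ospList (mkPart h) (mkEquiv h) = L := by
  apply List.ext_getElem
  · simp [ospList, mkPart_card h]
  · intro n h1 h2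
    simp only [ospList, List.getElem_ofFn, mkEquiv_val, List.get_eq_getElem]
    rfl

lemma headI_eq_get {L : List F} (h : L ≠ []) (hc : 0 < L.length) :
    L.headI = L.get ⟨0, hc⟩ := by
  cases L with
  | nil => exact absurd rfl h
  | cons a l => rfl

lemma mkEquiv_valid {L : List F} (h : listOP z L) :
    ∀ i, z ∈ ((mkEquiv h i : {π // π ∈ (mkPart h).parts}) : F) → (i : ℕ) = 0 := by
  intro i hz
  rw [mkEquiv_val] at hz
  by_contra h0
  have hc : 0 < L.length := by
    have := (Fin.cast (mkPart_card h) i).pos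
    omega
  have hz0 : z ∈ L.get ⟨0, hc⟩ := by
    rw [← headI_eq_get (listOP_ne_nil h) hc]
    exact h.2.2.2
  have hlt : (⟨0, hc⟩ : Fin L.length) < Fin.cast (mkPart_card h) i := by
    rw [Fin.lt_def]
    simp only [Fin.coe_cast]
    omega
  have hdisj := (List.pairwise_iff_get.1 h.2.1) _ _ hlt
  exact Finset.disjoint_left.1 hdisj hz0 hz

end MK

/-- The type of a partition together with an enumeration of its blocks. -/
abbrev domType (p : ℕ) :=
  Σ P : Finpartition (Finset.univ : Finset (Fin p)),
    (Fin P.parts.card ≃ {π // π ∈ P.parts})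

lemma univ_listOP (z : Fin p) : listOP z [(Finset.univ : F)] := by
  refine ⟨?_, by simp, by simp [unL], by simp [List.headI]⟩
  intro σ hσ
  rw [List.mem_singleton] at hσ
  subst hσ
  exact ⟨z, Finset.mem_univ z⟩

/-- Convert an ordered-set-partition list to a pair (partition, enumeration). -/
noncomputable def toPF (z : Fin p) (L : List F) : domType p :=
  haveI := Classical.dec (listOP z L)
  if h : listOP z L then ⟨mkPart h, mkEquiv h⟩
  else ⟨mkPart (univ_listOP z), mkEquiv (univ_listOP z)⟩

lemma toPF_of_listOP {z : Fin p} {L : List F} (h : listOP z L) :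
    toPF z L = ⟨mkPart h, mkEquiv h⟩ := by
  simp only [toPF]
  exact dif_pos h

lemma ospList_toPF {z : Fin p} {L : List F} (h : listOP z L) :
    ospList (toPF z L).1 (toPF z L).2 = L := by
  rw [toPF_of_listOP h]
  exact ospList_mk h

lemma domType_ext {x y : domType p} (h1 : x.1 = y.1)
    (h2 : ∀ i : Fin x.1.parts.card,
      ((x.2 i : {π // π ∈ x.1.parts}) : F)
        = ((y.2 (Fin.cast (by rw [h1]) i) : {π // π ∈ y.1.parts}) : F)) :
    x = y := by
  obtain ⟨P, f⟩ := x
  obtain ⟨Q, g⟩ := y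
  have h1' : P = Q := h1
  subst h1'
  have hfg : f = g := Equiv.ext (fun i => Subtype.ext (h2 i))
  rw [hfg]

lemma toPF_ospList {z : Fin p} (x : domType p)
    (hf : ∀ i, z ∈ ((x.2 i : {π // π ∈ x.1.parts}) : F) → (i : ℕ) = 0) :
    toPF z (ospList x.1 x.2) = x := by
  have h := ospList_listOP x.2 hf
  rw [toPF_of_listOP h]
  refine domType_ext ?_ ?_
  · apply Finpartition.ext
    rw [mkPart_parts, ospList_toFinset]
  · intro i
    rw [mkEquiv_val]
    simp only [ospList, List.get_ofFn]
    rfl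

lemma card_filter_equiv {n : ℕ} {α : Type*} [Fintype α] [DecidableEq α]
    (hcard : Fintype.card α = n) (i0 : Fin n) (a : α) :
    (Finset.univ.filter (fun f : Fin n ≃ α => f i0 = a)).card = (n - 1).factorial := by
  classical
  have hfib : ∀ b : α, (Finset.univ.filter (fun f : Fin n ≃ α => f i0 = b)).card
      = (Finset.univ.filter (fun f : Fin n ≃ α => f i0 = a)).card := by
    intro b
    apply Finset.card_bij (fun f _ => f.trans (Equiv.swap b a))
    · intro f hf
      simp only [Finset.mem_filter, Finset.mem_univ, true_and] at hf ⊢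
      rw [Equiv.trans_apply, hf, Equiv.swap_apply_left]
    · intro f hf g hg hfg
      have := congrArg (fun e : Fin n ≃ α => e.trans (Equiv.swap b a)) hfg
      simpa [Equiv.trans_assoc, Equiv.swap_swap] using this
    · intro g hg
      simp only [Finset.mem_filter, Finset.mem_univ, true_and] at hg
      refine ⟨g.trans (Equiv.swap b a), ?_, ?_⟩
      · simp only [Finset.mem_filter, Finset.mem_univ, true_and, Equiv.trans_apply, hg]
        exact Equiv.swap_apply_right b a
      · simp [Equiv.trans_assoc, Equiv.swap_swap]
  have htot : Fintype.card (Fin n ≃ α)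
      = ∑ b : α, (Finset.univ.filter (fun f : Fin n ≃ α => f i0 = b)).card := by
    rw [← Finset.card_univ]
    exact Finset.card_eq_sum_card_fiberwise (fun f _ => Finset.mem_univ (f i0))
  have hcardeq : Fintype.card (Fin n ≃ α) = n.factorial := by
    rw [Fintype.card_equiv (Fintype.equivFinOfCardEq hcard).symm]
    simp
  have hconst : ∑ b : α, (Finset.univ.filter (fun f : Fin n ≃ α => f i0 = b)).card
      = n * (Finset.univ.filter (fun f : Fin n ≃ α => f i0 = a)).card := by
    rw [Finset.sum_congr rfl (fun b _ => hfib b), Finset.sum_const, Finset.card_univ,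
      hcard, smul_eq_mul]
  have hn : 0 < n := i0.pos
  have hfact : n.factorial = n * (n - 1).factorial := by
    cases n with
    | zero => omega
    | succ k => simp [Nat.factorial_succ]
  have := htot.symm.trans hcardeq
  rw [hconst, hfact] at this
  exact Nat.eq_of_mul_eq_mul_left hn this

lemma card_valid_filter (z : Fin p) (P : Finpartition (Finset.univ : Finset (Fin p))) :
    (Finset.univ.filter (fun f : Fin P.parts.card ≃ {π // π ∈ P.parts} =>
      ∀ i, z ∈ ((f i : {π // π ∈ P.parts}) : F) → (i : ℕ) = 0)).card
      = (P.parts.card - 1).factorial := by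
  classical
  obtain ⟨π₀, hmem, hz⟩ := P.exists_mem (Finset.mem_univ z)
  have hc : 0 < P.parts.card := Finset.card_pos.2 ⟨π₀, hmem⟩
  have hiff : ∀ f : Fin P.parts.card ≃ {π // π ∈ P.parts},
      (∀ i, z ∈ ((f i : {π // π ∈ P.parts}) : F) → (i : ℕ) = 0)
        ↔ f ⟨0, hc⟩ = ⟨π₀, hmem⟩ := by
    intro f
    constructor
    · intro hf
      set i := f.symm ⟨π₀, hmem⟩ with hi
      have hzi : z ∈ ((f i : {π // π ∈ P.parts}) : F) := by
        rw [hi, Equiv.apply_symm_apply]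
        exact hz
      have : i = ⟨0, hc⟩ := Fin.ext (hf i hzi)
      rw [← this, hi, Equiv.apply_symm_apply]
    · intro hf i hzi
      have heq : ((f i : {π // π ∈ P.parts}) : F) = π₀ :=
        P.eq_of_mem_parts (f i).2 hmem hzi hz
      have : f i = f ⟨0, hc⟩ := by
        rw [hf]
        exact Subtype.ext heq
      have := f.injective this
      exact congrArg Fin.val this
  rw [Finset.filter_congr (fun f _ => hiff f)]
  exact card_filter_equiv (Fintype.card_coe _) ⟨0, hc⟩ ⟨π₀, hmem⟩

/-- The block list of an element of `domType`. -/
def ospL (x : domType p) : List F := ospList x.1 x.2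

def Gfun (I : Finset (Fin p)) (m : F → ℝ) (x : domType p) (S : Finset (F × F)) : ℝ :=
  (-1 : ℝ) ^ (x.1.parts.card + (Dlist I (ospL x)).length - 1)
      * ((∏ s ∈ S, m (s.1 ∪ s.2)) * ∏ s ∈ (Dlist I (ospL x)).toFinset \ S, -(m s.1 * m s.2))
    * ((Mlist I (ospL x)).map m).prod

def basicF (m : F → ℝ) (x : domType p) : ℝ :=
  (-1 : ℝ) ^ (x.1.parts.card - 1) * ∏ π ∈ x.1.parts, m π

lemma mergeL_listOP {z : Fin p} {L : List F} (S : Finset (F × F)) (h : listOP z L) :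
    listOP z (mergeL L S) :=
  ⟨mergeL_nonempty L S h.1, mergeL_pairwise L S h.2.1,
    by rw [mergeL_unL]; exact h.2.2.1,
    (mergeL_headI S (listOP_ne_nil h)) h.2.2.2⟩

lemma splitL_listOP {z : Fin p} (hzI : z ∈ I) {L : List F} (h : listOP z L) :
    listOP z (splitL I L) :=
  ⟨splitL_nonempty I h.1, splitL_pairwise I h.2.1,
    by rw [splitL_unL]; exact h.2.2.1,
    splitL_headI I hzI h.2.2.2⟩

lemma expandE (m : F → ℝ) (x : domType p) :
    (-1 : ℝ) ^ (x.1.parts.card + (Dlist I (ospL x)).length - 1)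
        * ((Dlist I (ospL x)).map (fun q => m (q.1 ∪ q.2) - m q.1 * m q.2)).prod
        * ((Mlist I (ospL x)).map m).prod
      = ∑ S ∈ (Dlist I (ospL x)).toFinset.powerset, Gfun I m x S := by
  classical
  have hnd : (Dlist I (ospL x)).Nodup := Dlist_nodup I (ospList_nodup x.2)
  rw [← List.prod_toFinset _ hnd]
  have hexp : ((Dlist I (ospL x)).toFinset.prod (fun q => m (q.1 ∪ q.2) - m q.1 * m q.2))
      = ∑ S ∈ (Dlist I (ospL x)).toFinset.powerset,
          (∏ s ∈ S, m (s.1 ∪ s.2)) * ∏ s ∈ (Dlist I (ospL x)).toFinset \ S, -(m s.1 * m s.2) := by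
    rw [← Finset.prod_add]
    exact Finset.prod_congr rfl (fun q _ => by ring)
  rw [hexp, Finset.mul_sum, Finset.sum_mul]
  rfl

lemma Gfun_eq_basic {z : Fin p} (m : F → ℝ) (x : domType p) (S : Finset (F × F))
    (hval : ∀ i, z ∈ ((x.2 i : {π // π ∈ x.1.parts}) : F) → (i : ℕ) = 0)
    (hS : S ⊆ (Dlist I (ospL x)).toFinset) :
    Gfun I m x S = basicF m (toPF z (mergeL (ospL x) S)) := by
  classical
  have hop : listOP z (ospL x) := ospList_listOP x.2 hval
  set L := ospL x with hLdef
  have hne := hop.1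
  have hpw := hop.2.1
  have hopM : listOP z (mergeL L S) := mergeL_listOP S hop
  rw [toPF_of_listOP hopM]
  show Gfun I m x S = (-1 : ℝ) ^ ((mkPart hopM).parts.card - 1) * ∏ π ∈ (mkPart hopM).parts, m π
  have hcard : (mkPart hopM).parts.card = (mergeL L S).length := mkPart_card hopM
  have hprodparts : ∏ π ∈ (mkPart hopM).parts, m π = ((mergeL L S).map m).prod := by
    rw [mkPart_parts]
    exact List.prod_toFinset m (listOP_nodup hopM)
  rw [hcard, hprodparts, mergeL_prod I m L S hne hpw hS, Gfun]
  have hDn : (Dlist I L).Nodup := Dlist_nodup I (listOP_nodup hop)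
  have hdcard : (Dlist I L).toFinset.card = (Dlist I L).length := List.toFinset_card_of_nodup hDn
  have hneg : ∏ s ∈ (Dlist I L).toFinset \ S, -(m s.1 * m s.2)
      = (-1 : ℝ) ^ ((Dlist I L).toFinset \ S).card
          * ∏ s ∈ (Dlist I L).toFinset \ S, m s.1 * m s.2 := by
    rw [← Finset.prod_const, ← Finset.prod_mul_distrib]
    exact Finset.prod_congr rfl (fun s _ => by ring)
  have hsd : ((Dlist I L).toFinset \ S).card = (Dlist I L).length - S.card := by
    rw [Finset.card_sdiff_of_subset hS, hdcard]
  have hka : (mergeL L S).length + S.card = L.length := mergeL_length I L S hne hpw hS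
  have ha_le : S.card ≤ (Dlist I L).length := by
    rw [← hdcard]; exact Finset.card_le_card hS
  have hd_le : (Dlist I L).length ≤ L.length - 1 := Dlist_length_le I
  have hL1 : 0 < L.length := List.length_pos_iff.2 (listOP_ne_nil hop)
  have hk1 : 0 < (mergeL L S).length :=
    List.length_pos_iff.2 (mergeL_ne_nil S (listOP_ne_nil hop))
  have hn : x.1.parts.card = L.length := (ospList_length x.2).symm
  have hsign : (-1 : ℝ) ^ (x.1.parts.card + (Dlist I L).length - 1)
        * (-1) ^ ((Dlist I L).length - S.card)
      = (-1) ^ ((mergeL L S).length - 1) := by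
    rw [← pow_add]
    have hexp : (x.1.parts.card + (Dlist I L).length - 1) + ((Dlist I L).length - S.card)
        = ((mergeL L S).length - 1) + 2 * (Dlist I L).length := by omega
    rw [hexp, pow_add, pow_mul]
    norm_num
  rw [hneg, hsd, ← hsign]
  ring

lemma key_bij (z : Fin p) (hzI : z ∈ I) (m : F → ℝ) :
    ∑ y ∈ ((Finset.univ.filter (fun P : Finpartition (Finset.univ : Finset (Fin p)) =>
          ∀ π ∈ P.parts, π ⊆ I ∨ π ⊆ Iᶜ)).sigma
          (fun P => Finset.univ.filter (fun f : Fin P.parts.card ≃ {π // π ∈ P.parts} =>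
            ∀ i, z ∈ ((f i : {π // π ∈ P.parts}) : F) → (i : ℕ) = 0))).sigma
          (fun x => (Dlist I (ospL x)).toFinset.powerset),
        Gfun I m y.1 y.2
      = ∑ x ∈ (Finset.univ : Finset (Finpartition (Finset.univ : Finset (Fin p)))).sigma
          (fun P => Finset.univ.filter (fun f : Fin P.parts.card ≃ {π // π ∈ P.parts} =>
            ∀ i, z ∈ ((f i : {π // π ∈ P.parts}) : F) → (i : ℕ) = 0)),
          basicF m x := by
  classical
  have hmemB : ∀ y : Σ _ : domType p, Finset (F × F),
      y ∈ ((Finset.univ.filter (fun P : Finpartition (Finset.univ : Finset (Fin p)) =>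
          ∀ π ∈ P.parts, π ⊆ I ∨ π ⊆ Iᶜ)).sigma
          (fun P => Finset.univ.filter (fun f : Fin P.parts.card ≃ {π // π ∈ P.parts} =>
            ∀ i, z ∈ ((f i : {π // π ∈ P.parts}) : F) → (i : ℕ) = 0))).sigma
          (fun x => (Dlist I (ospL x)).toFinset.powerset) →
      (∀ i, z ∈ ((y.1.2 i : {π // π ∈ y.1.1.parts}) : F) → (i : ℕ) = 0)
        ∧ listOP z (ospL y.1) ∧ (∀ σ ∈ ospL y.1, σ ⊆ I ∨ σ ⊆ Iᶜ)
        ∧ y.2 ⊆ (Dlist I (ospL y.1)).toFinset := by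
    intro y hy
    rw [Finset.mem_sigma] at hy
    obtain ⟨hy1, hy2⟩ := hy
    rw [Finset.mem_sigma] at hy1
    obtain ⟨hP, hf⟩ := hy1
    have hPred := (Finset.mem_filter.1 hP).2
    have hval := (Finset.mem_filter.1 hf).2
    refine ⟨hval, ospList_listOP y.1.2 hval, ?_, Finset.mem_powerset.1 hy2⟩
    intro σ hσ
    exact hPred σ ((mem_ospList y.1.2).1 hσ)
  have hmemC : ∀ x : domType p,
      x ∈ (Finset.univ : Finset (Finpartition (Finset.univ : Finset (Fin p)))).sigma
          (fun P => Finset.univ.filter (fun f : Fin P.parts.card ≃ {π // π ∈ P.parts} =>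
            ∀ i, z ∈ ((f i : {π // π ∈ P.parts}) : F) → (i : ℕ) = 0)) →
      (∀ i, z ∈ ((x.2 i : {π // π ∈ x.1.parts}) : F) → (i : ℕ) = 0) := by
    intro x hx
    rw [Finset.mem_sigma] at hx
    exact (Finset.mem_filter.1 hx.2).2
  refine Finset.sum_nbij' (fun y => toPF z (mergeL (ospL y.1) y.2))
    (fun x => ⟨toPF z (splitL I (ospL x)), (crossList I (ospL x)).toFinset⟩)
    ?_ ?_ ?_ ?_ ?_
  · -- maps into target
    intro y hy
    obtain ⟨hval, hop, href, hS⟩ := hmemB y hy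
    have hopM : listOP z (mergeL (ospL y.1) y.2) := mergeL_listOP y.2 hop
    rw [toPF_of_listOP hopM, Finset.mem_sigma]
    exact ⟨Finset.mem_univ _, Finset.mem_filter.2 ⟨Finset.mem_univ _, mkEquiv_valid hopM⟩⟩
  · -- maps into source
    intro x hx
    have hvalx := hmemC x hx
    have hopx : listOP z (ospL x) := ospList_listOP x.2 hvalx
    have hopS : listOP z (splitL I (ospL x)) := splitL_listOP I hzI hopx
    rw [Finset.mem_sigma]
    dsimp only
    constructor
    · rw [Finset.mem_sigma, toPF_of_listOP hopS]
      dsimp only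
      constructor
      · refine Finset.mem_filter.2 ⟨Finset.mem_univ _, ?_⟩
        intro π hπ
        rw [mkPart_parts, List.mem_toFinset] at hπ
        exact splitL_refines I (ospL x) π hπ
      · exact Finset.mem_filter.2 ⟨Finset.mem_univ _, mkEquiv_valid hopS⟩
    · rw [Finset.mem_powerset,
        show ospL (toPF z (splitL I (ospL x))) = splitL I (ospL x) from ospList_toPF hopS]
      intro q hq
      rw [List.mem_toFinset] at hq ⊢
      exact crossList_subset_Dlist I (ospL x) q hq
  · -- left inverse
    intro y hy
    obtain ⟨hval, hop, href, hS⟩ := hmemB y hy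
    have hopM : listOP z (mergeL (ospL y.1) y.2) := mergeL_listOP y.2 hop
    have hosp : ospL (toPF z (mergeL (ospL y.1) y.2)) = mergeL (ospL y.1) y.2 :=
      ospList_toPF hopM
    obtain ⟨hsp, hcr⟩ := splitL_mergeL I (ospL y.1) y.2 hop.1 hop.2.1 href hS
    have e1 : toPF z (splitL I (ospL (toPF z (mergeL (ospL y.1) y.2)))) = y.1 := by
      rw [hosp, hsp]
      exact toPF_ospList y.1 hval
    have e2 : (crossList I (ospL (toPF z (mergeL (ospL y.1) y.2)))).toFinset = y.2 := by
      rw [hosp]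
      exact hcr
    show (⟨toPF z (splitL I (ospL (toPF z (mergeL (ospL y.1) y.2)))),
      (crossList I (ospL (toPF z (mergeL (ospL y.1) y.2)))).toFinset⟩
        : Σ _ : domType p, Finset (F × F)) = y
    rw [e1, e2]
  · -- right inverse
    intro x hx
    have hvalx := hmemC x hx
    have hopx : listOP z (ospL x) := ospList_listOP x.2 hvalx
    have hopS : listOP z (splitL I (ospL x)) := splitL_listOP I hzI hopx
    have hosp : ospL (toPF z (splitL I (ospL x))) = splitL I (ospL x) := ospList_toPF hopS
    show toPF z (mergeL (ospL (toPF z (splitL I (ospL x)))) (crossList I (ospL x)).toFinset) = x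
    rw [hosp, mergeL_splitL I (ospL x) hopx.1 hopx.2.1]
    exact toPF_ospList x hvalx
  · -- values agree
    intro y hy
    obtain ⟨hval, hop, href, hS⟩ := hmemB y hy
    exact Gfun_eq_basic I m y.1 y.2 hval hS

end Stmt16

/-- Clustering identity for cumulants: for any nonempty proper `I ⊆ {1,…,p}`
containing `1`,
`κ_{{1,…,p}} = Σ_{Π ≺ {I,I^c}} Σ_{τ, τ(1)=1} (−1)^{|Π|+|D(Π,τ)|−1}
  Π_{(σ1,σ2)∈D(Π,τ)} δ_{σ1,σ2} · Π_{σ∈M(Π,τ)} m_σ`,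
where `δ_{I,J} = m_{I∪J} − m_I m_J`; moreover each `D(Π,τ)` is nonempty.
Ordered set partitions are encoded by a partition `P` refining `{I,I^c}`
together with an enumeration of its blocks whose first block contains `1`. -/
theorem stmt_16 (p : ℕ) (hp : 1 ≤ p) (m : Finset (Fin p) → ℝ)
    (I : Finset (Fin p)) (hne : I.Nonempty) (hproper : I ≠ Finset.univ)
    (h1 : (⟨0, hp⟩ : Fin p) ∈ I) :
    ((∑ P : Finpartition (Finset.univ : Finset (Fin p)),
        (-1 : ℝ) ^ (P.parts.card - 1) * ((P.parts.card - 1).factorial : ℝ)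
          * ∏ π ∈ P.parts, m π)
      = ∑ P ∈ Finset.univ.filter
            (fun P : Finpartition (Finset.univ : Finset (Fin p)) =>
              ∀ π ∈ P.parts, π ⊆ I ∨ π ⊆ Iᶜ),
          ∑ f ∈ Finset.univ.filter
              (fun f : Fin P.parts.card ≃ {π // π ∈ P.parts} =>
                ∀ i : Fin P.parts.card,
                  (⟨0, hp⟩ : Fin p) ∈ ((f i : {π // π ∈ P.parts}) : Finset (Fin p))
                    → (i : ℕ) = 0),
            (-1 : ℝ) ^ (P.parts.card + (Dlist I (ospList P f)).length - 1)
              * ((Dlist I (ospList P f)).map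
                  (fun q => m (q.1 ∪ q.2) - m q.1 * m q.2)).prod
              * ((Mlist I (ospList P f)).map m).prod)
    ∧ ∀ P : Finpartition (Finset.univ : Finset (Fin p)),
        (∀ π ∈ P.parts, π ⊆ I ∨ π ⊆ Iᶜ) →
        ∀ f : Fin P.parts.card ≃ {π // π ∈ P.parts},
          (∀ i : Fin P.parts.card,
            (⟨0, hp⟩ : Fin p) ∈ ((f i : {π // π ∈ P.parts}) : Finset (Fin p))
              → (i : ℕ) = 0) →
          Dlist I (ospList P f) ≠ [] := by
  constructor
  · have hperP : ∀ P : Finpartition (Finset.univ : Finset (Fin p)),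
        (-1 : ℝ) ^ (P.parts.card - 1) * ((P.parts.card - 1).factorial : ℝ)
          * ∏ π ∈ P.parts, m π
        = ∑ f ∈ Finset.univ.filter
            (fun f : Fin P.parts.card ≃ {π // π ∈ P.parts} =>
              ∀ i : Fin P.parts.card,
                (⟨0, hp⟩ : Fin p) ∈ ((f i : {π // π ∈ P.parts}) : Finset (Fin p))
                  → (i : ℕ) = 0),
            Stmt16.basicF m ⟨P, f⟩ := by
      intro P
      have hconst : (∑ f ∈ Finset.univ.filter
            (fun f : Fin P.parts.card ≃ {π // π ∈ P.parts} =>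
              ∀ i : Fin P.parts.card,
                (⟨0, hp⟩ : Fin p) ∈ ((f i : {π // π ∈ P.parts}) : Finset (Fin p))
                  → (i : ℕ) = 0),
            Stmt16.basicF m (⟨P, f⟩ : Stmt16.domType p))
          = ∑ f ∈ Finset.univ.filter
            (fun f : Fin P.parts.card ≃ {π // π ∈ P.parts} =>
              ∀ i : Fin P.parts.card,
                (⟨0, hp⟩ : Fin p) ∈ ((f i : {π // π ∈ P.parts}) : Finset (Fin p))
                  → (i : ℕ) = 0),
            ((-1 : ℝ) ^ (P.parts.card - 1) * ∏ π ∈ P.parts, m π) :=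
        Finset.sum_congr rfl (fun f _ => rfl)
      rw [hconst, Finset.sum_const, Stmt16.card_valid_filter (⟨0, hp⟩ : Fin p) P,
        nsmul_eq_mul]
      ring
    have hR : (∑ P ∈ Finset.univ.filter
            (fun P : Finpartition (Finset.univ : Finset (Fin p)) =>
              ∀ π ∈ P.parts, π ⊆ I ∨ π ⊆ Iᶜ),
          ∑ f ∈ Finset.univ.filter
              (fun f : Fin P.parts.card ≃ {π // π ∈ P.parts} =>
                ∀ i : Fin P.parts.card,
                  (⟨0, hp⟩ : Fin p) ∈ ((f i : {π // π ∈ P.parts}) : Finset (Fin p))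
                    → (i : ℕ) = 0),
            (-1 : ℝ) ^ (P.parts.card + (Dlist I (ospList P f)).length - 1)
              * ((Dlist I (ospList P f)).map
                  (fun q => m (q.1 ∪ q.2) - m q.1 * m q.2)).prod
              * ((Mlist I (ospList P f)).map m).prod)
        = ∑ y ∈ ((Finset.univ.filter
            (fun P : Finpartition (Finset.univ : Finset (Fin p)) =>
              ∀ π ∈ P.parts, π ⊆ I ∨ π ⊆ Iᶜ)).sigma
            (fun P => Finset.univ.filter
              (fun f : Fin P.parts.card ≃ {π // π ∈ P.parts} =>
                ∀ i, (⟨0, hp⟩ : Fin p) ∈ ((f i : {π // π ∈ P.parts}) : Finset (Fin p))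
                  → (i : ℕ) = 0))).sigma
            (fun x => (Dlist I (Stmt16.ospL x)).toFinset.powerset),
          Stmt16.Gfun I m y.1 y.2 := by
      refine Eq.trans (Finset.sum_congr rfl (fun P _ => Finset.sum_congr rfl
        (fun f _ => Stmt16.expandE I m ⟨P, f⟩))) ?_
      refine Eq.trans (Finset.sum_sigma' _ _ _) ?_
      exact Finset.sum_sigma' _ _ _
    refine Eq.trans (Finset.sum_congr rfl (fun P _ => hperP P)) ?_
    refine Eq.trans (Finset.sum_sigma' _ _ _) ?_
    refine Eq.trans (Stmt16.key_bij I (⟨0, hp⟩ : Fin p) h1 m).symm ?_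
    exact hR.symm
  · intro P hP f hf
    have hop : Stmt16.listOP (⟨0, hp⟩ : Fin p) (ospList P f) :=
      Stmt16.ospList_listOP f hf
    refine Stmt16.Dlist_ne_nil_of I (ospList P f) ?_ (Stmt16.listOP_ne_nil hop) ?_ ?_
    · intro σ hσ
      exact hP σ ((Stmt16.mem_ospList f).1 hσ)
    · have hmem : (ospList P f).headI ∈ ospList P f := by
        obtain ⟨a, l, hL⟩ := List.exists_cons_of_ne_nil (Stmt16.listOP_ne_nil hop)
        rw [hL]
        simp
      rcases hP _ ((Stmt16.mem_ospList f).1 hmem) with h | h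
      · exact h
      · exact absurd h1 (Finset.mem_compl.1 (h hop.2.2.2))
    · obtain ⟨x, hx⟩ : ∃ x : Fin p, x ∉ I := by
        by_contra hcon
        push_neg at hcon
        exact hproper (Finset.eq_univ_iff_forall.2 hcon)
      obtain ⟨β, hβm, hβx⟩ := P.exists_mem (Finset.mem_univ x)
      exact ⟨β, (Stmt16.mem_ospList f).2 hβm, fun hsub => hx (hsub hβx)⟩
end

section
/- Every ordered set partition (π_1,…,π_k) of {1,…,p} with 1 ∈ π_1 has a unique 'I-refinement' (π_1∩I, π_1∩I^c, …, π_k∩I, π_k∩I^c) (omitting empty sets), and the pairs (Π,τ) arising as I-refinements are exactly those ordered set partitions in which every block is contained in I or in I^c; moreover, for a given I-refined ordered set partition with l pairs of consecutive blocks lying in I and I^c respectively, exactly 2^l ordered set partitions of {1,…,p} have it as their I-refinement. -/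
open Finset

/-- `L` is an ordered set partition of `{1,…,p}`: its blocks are nonempty,
pairwise disjoint, and their union is everything. -/
def isOSP {p : ℕ} (L : List (Finset (Fin p))) : Prop :=
  (∀ π ∈ L, π.Nonempty) ∧ List.Pairwise (fun π σ => Disjoint π σ) L ∧
    L.foldr (· ∪ ·) ∅ = (Finset.univ : Finset (Fin p))

/-- The element `e` lies in the first block of `L`. -/
def headMem {p : ℕ} (e : Fin p) (L : List (Finset (Fin p))) : Prop :=
  ∃ π, L.head? = some π ∧ e ∈ π

/-- The `I`-refinement of an ordered set partition: each block `π` is replaced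
by `π ∩ I, π ∩ I^c`, omitting empty sets. -/
def Irefine {p : ℕ} (I : Finset (Fin p)) (L : List (Finset (Fin p))) :
    List (Finset (Fin p)) :=
  L.flatMap (fun π => [π ∩ I, π ∩ Iᶜ].filter (fun σ => decide σ.Nonempty))

namespace Stmt17Aux

variable {p : ℕ}

/-- The pieces of a block. -/
def pcs (I : Finset (Fin p)) (π : Finset (Fin p)) : List (Finset (Fin p)) :=
  [π ∩ I, π ∩ Iᶜ].filter (fun σ => decide σ.Nonempty)

lemma Irefine_cons (I π : Finset (Fin p)) (L : List (Finset (Fin p))) :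
    Irefine I (π :: L) = pcs I π ++ Irefine I L := by
  simp [Irefine, pcs]

lemma Irefine_nil (I : Finset (Fin p)) : Irefine I ([] : List (Finset (Fin p))) = [] := rfl

lemma inter_union_compl' (s t : Finset (Fin p)) : s ∩ t ∪ s ∩ tᶜ = s := by
  ext x; simp [and_or_left.symm, em]

lemma subset_compl_inter_empty {s t : Finset (Fin p)} (h : s ⊆ t) : s ∩ tᶜ = ∅ := by
  ext x; simp only [mem_inter, mem_compl, notMem_empty, iff_false]
  rintro ⟨hx, hn⟩; exact hn (h hx)

lemma pcs_of_subI {I σ : Finset (Fin p)} (hσ : σ.Nonempty) (h : σ ⊆ I) :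
    pcs I σ = [σ] := by
  have h1 : σ ∩ I = σ := inter_eq_left.mpr h
  have h2 : σ ∩ Iᶜ = ∅ := subset_compl_inter_empty h
  simp [pcs, h1, h2, hσ, List.filter]

lemma pcs_of_subIc {I σ : Finset (Fin p)} (hσ : σ.Nonempty) (h : σ ⊆ Iᶜ) :
    pcs I σ = [σ] := by
  have h1 : σ ∩ Iᶜ = σ := inter_eq_left.mpr h
  have h2 : σ ∩ I = ∅ := by
    have := subset_compl_inter_empty h; rwa [compl_compl] at this
  simp [pcs, h1, h2, hσ, List.filter]

lemma pcs_mixed {I π : Finset (Fin p)} (h1 : (π ∩ I).Nonempty) (h2 : (π ∩ Iᶜ).Nonempty) :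
    pcs I π = [π ∩ I, π ∩ Iᶜ] := by
  simp [pcs, h1, h2, List.filter]

lemma mem_pcs {I σ π : Finset (Fin p)} (h : σ ∈ pcs I π) :
    σ ⊆ π ∧ σ.Nonempty ∧ (σ ⊆ I ∨ σ ⊆ Iᶜ) := by
  simp only [pcs, List.mem_filter, List.mem_cons, List.mem_singleton,
    decide_eq_true_iff, List.not_mem_nil, or_false] at h
  rcases h with ⟨h1 | h1, h2⟩ <;> subst h1
  · exact ⟨inter_subset_left, h2, Or.inl inter_subset_right⟩
  · exact ⟨inter_subset_left, h2, Or.inr inter_subset_right⟩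

lemma pcs_cases {I π : Finset (Fin p)} (hπ : π.Nonempty) :
    (pcs I π = [π] ∧ (π ⊆ I ∨ π ⊆ Iᶜ)) ∨
      (pcs I π = [π ∩ I, π ∩ Iᶜ] ∧ (π ∩ I).Nonempty ∧ (π ∩ Iᶜ).Nonempty) := by
  by_cases h1 : (π ∩ I).Nonempty
  · by_cases h2 : (π ∩ Iᶜ).Nonempty
    · exact Or.inr ⟨pcs_mixed h1 h2, h1, h2⟩
    · have hsub : π ⊆ I := by
        intro x hx
        by_contra hxI
        exact h2 ⟨x, mem_inter.mpr ⟨hx, mem_compl.mpr hxI⟩⟩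
      exact Or.inl ⟨pcs_of_subI hπ hsub, Or.inl hsub⟩
  · have hsub : π ⊆ Iᶜ := by
      intro x hx
      by_contra hxI
      simp only [mem_compl, not_not] at hxI
      exact h1 ⟨x, mem_inter.mpr ⟨hx, hxI⟩⟩
    exact Or.inl ⟨pcs_of_subIc hπ hsub, Or.inr hsub⟩

lemma pcs_ne_nil {I π : Finset (Fin p)} (hπ : π.Nonempty) : pcs I π ≠ [] := by
  rcases pcs_cases (I := I) hπ with ⟨h, _⟩ | ⟨h, _⟩ <;> simp [h]

lemma pcs_subset_self {I σ π : Finset (Fin p)} (h : σ ∈ pcs I π) : σ ⊆ π :=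
  (mem_pcs h).1

lemma foldr_pcs (I π : Finset (Fin p)) (s : Finset (Fin p)) :
    (pcs I π).foldr (· ∪ ·) s = π ∪ s := by
  by_cases hπ : π.Nonempty
  · rcases pcs_cases (I := I) hπ with ⟨h, _⟩ | ⟨h, _, _⟩ <;> rw [h]
    · rfl
    · simp only [List.foldr_cons, List.foldr_nil]
      rw [← Finset.union_assoc, inter_union_compl']
  · have : π = ∅ := Finset.not_nonempty_iff_eq_empty.mp hπ
    subst this
    simp [pcs]

lemma foldr_Irefine (I : Finset (Fin p)) (L : List (Finset (Fin p))) :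
    (Irefine I L).foldr (· ∪ ·) ∅ = L.foldr (· ∪ ·) ∅ := by
  induction L with
  | nil => rfl
  | cons π L ih =>
    rw [Irefine_cons, List.foldr_append, ih, foldr_pcs, List.foldr_cons]

lemma mem_Irefine {I σ : Finset (Fin p)} {L : List (Finset (Fin p))} :
    σ ∈ Irefine I L ↔ ∃ π ∈ L, σ ∈ pcs I π := by
  simp [Irefine, pcs, List.mem_flatMap]

lemma pairwise_Irefine {I : Finset (Fin p)} {L : List (Finset (Fin p))}
    (h : L.Pairwise (fun a b => Disjoint a b)) :
    (Irefine I L).Pairwise (fun a b => Disjoint a b) := by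
  induction L with
  | nil => exact List.Pairwise.nil
  | cons π L ih =>
    rw [Irefine_cons, List.pairwise_append]
    refine ⟨?_, ih h.tail, ?_⟩
    · refine List.Pairwise.filter _ ?_
      simp only [List.pairwise_cons, List.mem_singleton, List.Pairwise.nil, and_true,
        List.not_mem_nil, false_implies, implies_true, forall_eq]
      exact disjoint_compl_right.mono inf_le_right inf_le_right
    · intro a ha b hb
      obtain ⟨σ, hσL, hbσ⟩ := mem_Irefine.mp hb
      have hπσ : Disjoint π σ := (List.rel_of_pairwise_cons h) hσL
      exact hπσ.mono (pcs_subset_self ha) (pcs_subset_self hbσ)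

lemma pairwise_of_Irefine {I : Finset (Fin p)} {L : List (Finset (Fin p))}
    (hne : ∀ π ∈ L, π.Nonempty)
    (h : (Irefine I L).Pairwise (fun a b => Disjoint a b)) :
    L.Pairwise (fun a b => Disjoint a b) := by
  induction L with
  | nil => exact List.Pairwise.nil
  | cons π L ih =>
    rw [Irefine_cons, List.pairwise_append] at h
    obtain ⟨-, h2, hcross⟩ := h
    refine List.pairwise_cons.mpr ⟨?_, ih (fun σ hσ => hne σ (by simp [hσ])) h2⟩
    intro σ hσL
    rw [Finset.disjoint_left]
    intro x hxπ hxσ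
    by_cases hxI : x ∈ I
    · have hπne : (π ∩ I).Nonempty := ⟨x, mem_inter.mpr ⟨hxπ, hxI⟩⟩
      have hσne : (σ ∩ I).Nonempty := ⟨x, mem_inter.mpr ⟨hxσ, hxI⟩⟩
      have ha : π ∩ I ∈ pcs I π :=
        List.mem_filter.mpr ⟨by simp, by simpa using hπne⟩
      have hb : σ ∩ I ∈ Irefine I L := mem_Irefine.mpr ⟨σ, hσL,
        List.mem_filter.mpr ⟨by simp, by simpa using hσne⟩⟩
      have := hcross _ ha _ hb
      exact (Finset.disjoint_left.mp this (mem_inter.mpr ⟨hxπ, hxI⟩))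
        (mem_inter.mpr ⟨hxσ, hxI⟩)
    · have hxIc : x ∈ Iᶜ := mem_compl.mpr hxI
      have hπne : (π ∩ Iᶜ).Nonempty := ⟨x, mem_inter.mpr ⟨hxπ, hxIc⟩⟩
      have hσne : (σ ∩ Iᶜ).Nonempty := ⟨x, mem_inter.mpr ⟨hxσ, hxIc⟩⟩
      have ha : π ∩ Iᶜ ∈ pcs I π :=
        List.mem_filter.mpr ⟨by simp, by simpa using hπne⟩
      have hb : σ ∩ Iᶜ ∈ Irefine I L := mem_Irefine.mpr ⟨σ, hσL,
        List.mem_filter.mpr ⟨by simp, by simpa using hσne⟩⟩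
      have := hcross _ ha _ hb
      exact (Finset.disjoint_left.mp this (mem_inter.mpr ⟨hxπ, hxIc⟩))
        (mem_inter.mpr ⟨hxσ, hxIc⟩)

lemma Irefine_eq_nil {I : Finset (Fin p)} {L : List (Finset (Fin p))}
    (hne : ∀ π ∈ L, π.Nonempty) (h : Irefine I L = []) : L = [] := by
  cases L with
  | nil => rfl
  | cons π L =>
    rw [Irefine_cons] at h
    exact absurd (List.append_eq_nil_iff.mp h).1 (pcs_ne_nil (hne π (by simp)))

lemma Irefine_self {I : Finset (Fin p)} {M : List (Finset (Fin p))}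
    (hM : ∀ σ ∈ M, σ.Nonempty ∧ (σ ⊆ I ∨ σ ⊆ Iᶜ)) : Irefine I M = M := by
  induction M with
  | nil => rfl
  | cons σ M ih =>
    rw [Irefine_cons, ih (fun ρ hρ => hM ρ (by simp [hρ]))]
    obtain ⟨hσ, hsub | hsub⟩ := hM σ (by simp)
    · rw [pcs_of_subI hσ hsub]; rfl
    · rw [pcs_of_subIc hσ hsub]; rfl

/-- The preimage set. -/
def Pset (I : Finset (Fin p)) (M : List (Finset (Fin p))) : Set (List (Finset (Fin p))) :=
  {L | (∀ π ∈ L, π.Nonempty) ∧ Irefine I L = M}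

lemma Pset_nil (I : Finset (Fin p)) : Pset I [] = {([] : List (Finset (Fin p)))} := by
  ext L
  constructor
  · rintro ⟨h1, h2⟩; exact Irefine_eq_nil h1 h2
  · rintro rfl; exact ⟨by simp, rfl⟩

lemma Pset_cons_no {I σ : Finset (Fin p)} {M' : List (Finset (Fin p))}
    (hσ : σ.Nonempty) (hσI : σ ⊆ I ∨ σ ⊆ Iᶜ)
    (hno : ∀ τ M'', M' = τ :: M'' → ¬(σ ⊆ I ∧ τ ⊆ Iᶜ)) :
    Pset I (σ :: M') = (σ :: ·) '' Pset I M' := by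
  ext L
  constructor
  · rintro ⟨h1, h2⟩
    cases L with
    | nil => simp [Irefine_nil] at h2
    | cons π L' =>
      rw [Irefine_cons] at h2
      have hπ : π.Nonempty := h1 π (by simp)
      rcases pcs_cases (I := I) hπ with ⟨hp, hor⟩ | ⟨hp, hn1, hn2⟩
      · rw [hp] at h2
        simp only [List.cons_append, List.nil_append, List.cons.injEq] at h2
        obtain ⟨rfl, h2⟩ := h2
        exact ⟨L', ⟨fun ρ hρ => h1 ρ (by simp [hρ]), h2⟩, rfl⟩
      · rw [hp] at h2
        simp only [List.cons_append, List.cons.injEq] at h2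
        obtain ⟨he1, h2⟩ := h2
        exfalso
        cases M' with
        | nil => simp at h2
        | cons τ M'' =>
          simp only [List.cons.injEq] at h2
          exact hno τ M'' rfl ⟨he1 ▸ inter_subset_right, h2.1 ▸ inter_subset_right⟩
  · rintro ⟨L', ⟨h1, h2⟩, rfl⟩
    refine ⟨?_, ?_⟩
    · intro ρ hρ
      rcases List.mem_cons.mp hρ with rfl | hρ
      · exact hσ
      · exact h1 ρ hρ
    · rw [Irefine_cons, h2]
      rcases hσI with hsub | hsub
      · rw [pcs_of_subI hσ hsub]; rfl
      · rw [pcs_of_subIc hσ hsub]; rfl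

lemma Pset_cons_merge {I σ τ : Finset (Fin p)} {M'' : List (Finset (Fin p))}
    (hσ : σ.Nonempty) (hτ : τ.Nonempty) (hσI : σ ⊆ I) (hτI : τ ⊆ Iᶜ) :
    Pset I (σ :: τ :: M'') =
      (σ :: ·) '' Pset I (τ :: M'') ∪ ((σ ∪ τ) :: ·) '' Pset I M'' := by
  have hστ1 : (σ ∪ τ) ∩ I = σ := by
    rw [union_inter_distrib_right, inter_eq_left.mpr hσI,
      show τ ∩ I = ∅ by
        have := subset_compl_inter_empty hτI; rwa [compl_compl] at this,
      union_empty]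
  have hστ2 : (σ ∪ τ) ∩ Iᶜ = τ := by
    rw [union_inter_distrib_right, inter_eq_left.mpr hτI, subset_compl_inter_empty hσI,
      empty_union]
  ext L
  constructor
  · rintro ⟨h1, h2⟩
    cases L with
    | nil => simp [Irefine_nil] at h2
    | cons π L' =>
      rw [Irefine_cons] at h2
      have hπ : π.Nonempty := h1 π (by simp)
      have hL' : ∀ ρ ∈ L', ρ.Nonempty := fun ρ hρ => h1 ρ (by simp [hρ])
      rcases pcs_cases (I := I) hπ with ⟨hp, _⟩ | ⟨hp, hn1, hn2⟩
      · rw [hp] at h2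
        simp only [List.cons_append, List.nil_append, List.cons.injEq] at h2
        obtain ⟨rfl, h2⟩ := h2
        exact Or.inl ⟨L', ⟨hL', h2⟩, rfl⟩
      · rw [hp] at h2
        simp only [List.cons_append, List.cons.injEq] at h2
        obtain ⟨he1, he2, h2⟩ := h2
        right
        refine ⟨L', ⟨hL', h2⟩, ?_⟩
        have : π = σ ∪ τ := by rw [← he1, ← he2, inter_union_compl']
        rw [this]
  · rintro (⟨L', ⟨h1, h2⟩, rfl⟩ | ⟨L', ⟨h1, h2⟩, rfl⟩)
    · refine ⟨?_, ?_⟩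
      · intro ρ hρ
        rcases List.mem_cons.mp hρ with rfl | hρ
        · exact hσ
        · exact h1 ρ hρ
      · rw [Irefine_cons, h2, pcs_of_subI hσ hσI]; rfl
    · refine ⟨?_, ?_⟩
      · intro ρ hρ
        rcases List.mem_cons.mp hρ with rfl | hρ
        · exact hσ.mono subset_union_left
        · exact h1 ρ hρ
      · have e1 : ((σ ∪ τ) ∩ I).Nonempty := by rw [hστ1]; exact hσ
        have e2 : ((σ ∪ τ) ∩ Iᶜ).Nonempty := by rw [hστ2]; exact hτ
        rw [Irefine_cons, h2, pcs_mixed e1 e2, hστ1, hστ2]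
        rfl

lemma Dlist_nil (I : Finset (Fin p)) : Dlist I ([] : List (Finset (Fin p))) = [] := rfl

lemma Dlist_singleton (I σ : Finset (Fin p)) : Dlist I [σ] = [] := rfl

lemma Dlist_cons_cons (I σ τ : Finset (Fin p)) (R : List (Finset (Fin p))) :
    Dlist I (σ :: τ :: R) =
      (if σ ⊆ I ∧ τ ⊆ Iᶜ then [(σ, τ)] else []) ++ Dlist I (τ :: R) := by
  simp only [Dlist, List.tail_cons, List.zip_cons_cons, List.filter_cons]
  by_cases h : σ ⊆ I ∧ τ ⊆ Iᶜ <;> simp [h]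

lemma Dlist_tail_eq {I τ : Finset (Fin p)} {M'' : List (Finset (Fin p))}
    (hτ : τ.Nonempty) (hτI : τ ⊆ Iᶜ) :
    (Dlist I (τ :: M'')).length = (Dlist I M'').length := by
  cases M'' with
  | nil => rfl
  | cons ρ R =>
    rw [Dlist_cons_cons]
    have : ¬(τ ⊆ I ∧ ρ ⊆ Iᶜ) := by
      rintro ⟨h1, -⟩
      obtain ⟨x, hx⟩ := hτ
      exact (mem_compl.mp (hτI hx)) (h1 hx)
    simp [this]

lemma cons_injective' (σ : Finset (Fin p)) :
    Function.Injective (fun L : List (Finset (Fin p)) => σ :: L) :=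
  fun _ _ h => (List.cons.injEq _ _ _ _ ▸ h).2

theorem Pset_count_aux (I : Finset (Fin p)) (n : ℕ) : ∀ (M : List (Finset (Fin p))),
    M.length ≤ n → (∀ σ ∈ M, σ.Nonempty ∧ (σ ⊆ I ∨ σ ⊆ Iᶜ)) →
    (Pset I M).Finite ∧ (Pset I M).ncard = 2 ^ (Dlist I M).length := by
  induction n with
  | zero =>
    intro M hlen _
    have : M = [] := List.length_eq_zero_iff.mp (Nat.le_zero.mp hlen)
    subst this
    simp [Pset_nil, Dlist_nil]
  | succ n ih =>
    intro M hlen hM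
    match M with
    | [] => simp [Pset_nil, Dlist_nil]
    | σ :: M' =>
      have hσ := (hM σ (by simp)).1
      have hσI := (hM σ (by simp)).2
      have hM' : ∀ ρ ∈ M', ρ.Nonempty ∧ (ρ ⊆ I ∨ ρ ⊆ Iᶜ) :=
        fun ρ hρ => hM ρ (by simp [hρ])
      have hlen' : M'.length ≤ n := by
        simp only [List.length_cons] at hlen; omega
      by_cases hmerge : ∃ τ M'', M' = τ :: M'' ∧ σ ⊆ I ∧ τ ⊆ Iᶜ
      · obtain ⟨τ, M'', rfl, hσsub, hτsub⟩ := hmerge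
        have hτ : τ.Nonempty := (hM' τ (by simp)).1
        have hM'' : ∀ ρ ∈ M'', ρ.Nonempty ∧ (ρ ⊆ I ∨ ρ ⊆ Iᶜ) :=
          fun ρ hρ => hM' ρ (by simp [hρ])
        have hlen'' : M''.length ≤ n := by
          simp only [List.length_cons] at hlen'; omega
        obtain ⟨hf1, hc1⟩ := ih (τ :: M'') hlen' hM'
        obtain ⟨hf2, hc2⟩ := ih M'' hlen'' hM''
        have hdlen : (Dlist I (σ :: τ :: M'')).length = (Dlist I M'').length + 1 := by
          rw [Dlist_cons_cons, if_pos ⟨hσsub, hτsub⟩, List.length_append,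
            Dlist_tail_eq hτ hτsub]
          simp [Nat.add_comm]
        rw [Pset_cons_merge hσ hτ hσsub hτsub]
        have hdisj : Disjoint ((σ :: ·) '' Pset I (τ :: M''))
            (((σ ∪ τ) :: ·) '' Pset I M'') := by
          rw [Set.disjoint_left]
          rintro L ⟨L1, -, rfl⟩ ⟨L2, -, hL2⟩
          simp only [List.cons.injEq] at hL2
          obtain ⟨x, hx⟩ := hτ
          have hxσ : x ∈ σ := by
            rw [← hL2.1]; exact mem_union_right _ hx
          exact (mem_compl.mp (hτsub hx)) (hσsub hxσ)
        refine ⟨(hf1.image _).union (hf2.image _), ?_⟩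
        rw [Set.ncard_union_eq hdisj (hf1.image _) (hf2.image _),
          Set.ncard_image_of_injective _ (cons_injective' σ),
          Set.ncard_image_of_injective _ (cons_injective' (σ ∪ τ)), hc1, hc2,
          hdlen, Dlist_tail_eq hτ hτsub, pow_succ]
        ring
      · have hno : ∀ τ M'', M' = τ :: M'' → ¬(σ ⊆ I ∧ τ ⊆ Iᶜ) := by
          intro τ M'' heq hc
          exact hmerge ⟨τ, M'', heq, hc⟩
        obtain ⟨hf, hc⟩ := ih M' hlen' hM'
        rw [Pset_cons_no hσ hσI hno]
        refine ⟨hf.image _, ?_⟩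
        rw [Set.ncard_image_of_injective _ (cons_injective' σ), hc]
        congr 1
        cases M' with
        | nil => rfl
        | cons τ M'' =>
          rw [Dlist_cons_cons]
          have : ¬(σ ⊆ I ∧ τ ⊆ Iᶜ) := hno τ M'' rfl
          simp [this]

theorem Pset_count (I : Finset (Fin p)) (M : List (Finset (Fin p)))
    (hM : ∀ σ ∈ M, σ.Nonempty ∧ (σ ⊆ I ∨ σ ⊆ Iᶜ)) :
    (Pset I M).Finite ∧ (Pset I M).ncard = 2 ^ (Dlist I M).length :=
  Pset_count_aux I M.length M le_rfl hM

end Stmt17Aux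

open Stmt17Aux in
/-- Every ordered set partition of `{1,…,p}` whose first block contains `1` has
a (unique, since `Irefine` is a function) `I`-refinement which is again an
ordered set partition with first block containing `1` and all blocks contained
in `I` or `I^c`; the `I`-refinements arising this way are exactly such ordered
set partitions; and an `I`-refined ordered set partition with `l` consecutive
pairs of blocks lying in `I` and `I^c` respectively has exactly `2^l`
preimages. -/
theorem stmt_17 (p : ℕ) (hp : 1 ≤ p) (I : Finset (Fin p))
    (hne : I.Nonempty) (hproper : I ≠ Finset.univ) (h1 : (⟨0, hp⟩ : Fin p) ∈ I) :
    (∀ L : List (Finset (Fin p)), isOSP L → headMem ⟨0, hp⟩ L →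
        isOSP (Irefine I L) ∧ headMem ⟨0, hp⟩ (Irefine I L) ∧
          ∀ σ ∈ Irefine I L, σ ⊆ I ∨ σ ⊆ Iᶜ)
    ∧ (∀ M : List (Finset (Fin p)),
        (isOSP M ∧ headMem ⟨0, hp⟩ M ∧ ∀ σ ∈ M, σ ⊆ I ∨ σ ⊆ Iᶜ)
          ↔ ∃ L, isOSP L ∧ headMem ⟨0, hp⟩ L ∧ Irefine I L = M)
    ∧ (∀ M : List (Finset (Fin p)),
        isOSP M → headMem ⟨0, hp⟩ M → (∀ σ ∈ M, σ ⊆ I ∨ σ ⊆ Iᶜ) →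
          Set.ncard {L : List (Finset (Fin p)) |
              isOSP L ∧ headMem ⟨0, hp⟩ L ∧ Irefine I L = M}
            = 2 ^ (Dlist I M).length) := by
  set e : Fin p := ⟨0, hp⟩ with he
  -- Part 1
  have part1 : ∀ L : List (Finset (Fin p)), isOSP L → headMem e L →
      isOSP (Irefine I L) ∧ headMem e (Irefine I L) ∧
        ∀ σ ∈ Irefine I L, σ ⊆ I ∨ σ ⊆ Iᶜ := by
    intro L hL hLh
    unfold isOSP at hL
    unfold headMem at hLh
    obtain ⟨hLne, hLpw, hLun⟩ := hL
    obtain ⟨π, hπhead, heπ⟩ := hLh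
    refine ⟨⟨?_, pairwise_Irefine hLpw, by rw [foldr_Irefine, hLun]⟩, ?_, ?_⟩
    · intro σ hσ
      obtain ⟨ρ, -, hσρ⟩ := mem_Irefine.mp hσ
      exact (mem_pcs hσρ).2.1
    · cases L with
      | nil => simp at hπhead
      | cons π' L' =>
        simp only [List.head?_cons, Option.some.injEq] at hπhead
        subst hπhead
        have hn1 : (π' ∩ I).Nonempty := ⟨e, mem_inter.mpr ⟨heπ, h1⟩⟩
        rw [Irefine_cons]
        by_cases hn2 : (π' ∩ Iᶜ).Nonempty
        · refine ⟨π' ∩ I, ?_, mem_inter.mpr ⟨heπ, h1⟩⟩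
          rw [pcs_mixed hn1 hn2]; rfl
        · have hsub : π' ⊆ I := by
            intro x hx
            by_contra hxI
            exact hn2 ⟨x, mem_inter.mpr ⟨hx, mem_compl.mpr hxI⟩⟩
          refine ⟨π', ?_, heπ⟩
          rw [pcs_of_subI ⟨e, heπ⟩ hsub]; rfl
    · intro σ hσ
      obtain ⟨ρ, -, hσρ⟩ := mem_Irefine.mp hσ
      exact (mem_pcs hσρ).2.2
  refine ⟨part1, ?_, ?_⟩
  · -- Part 2
    intro M
    constructor
    · rintro ⟨hM, hMh, hMsub⟩
      exact ⟨M, hM, hMh, Irefine_self (fun σ hσ => ⟨hM.1 σ hσ, hMsub σ hσ⟩)⟩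
    · rintro ⟨L, hL, hLh, rfl⟩
      obtain ⟨a, b, c⟩ := part1 L hL hLh
      exact ⟨a, b, c⟩
  · -- Part 3
    intro M hM hMh hMsub
    have hMprops : ∀ σ ∈ M, σ.Nonempty ∧ (σ ⊆ I ∨ σ ⊆ Iᶜ) :=
      fun σ hσ => ⟨hM.1 σ hσ, hMsub σ hσ⟩
    have hset : {L : List (Finset (Fin p)) |
        isOSP L ∧ headMem e L ∧ Irefine I L = M} = Pset I M := by
      ext L
      constructor
      · rintro ⟨hL, -, hLr⟩
        exact ⟨hL.1, hLr⟩
      · rintro ⟨hLne, hLr⟩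
        have hMne : M ≠ [] := by
          obtain ⟨μ, hμ, -⟩ := hMh
          cases M with
          | nil => simp at hμ
          | cons => simp
        have hLnil : L ≠ [] := by
          rintro rfl
          exact hMne hLr.symm
        refine ⟨⟨hLne, pairwise_of_Irefine hLne (hLr ▸ hM.2.1), ?_⟩, ?_, hLr⟩
        · rw [← foldr_Irefine I L, hLr, hM.2.2]
        · -- headMem e L
          cases L with
          | nil => exact absurd rfl hLnil
          | cons π L' =>
            refine ⟨π, rfl, ?_⟩
            obtain ⟨μ, hμ, heμ⟩ := hMh
            have hπ : π.Nonempty := hLne π (by simp)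
            rw [← hLr, Irefine_cons] at hμ
            rcases hpc : pcs I π with _ | ⟨a, rest⟩
            · exact absurd hpc (pcs_ne_nil hπ)
            · rw [hpc] at hμ
              simp only [List.cons_append, List.head?_cons, Option.some.injEq] at hμ
              subst hμ
              have : a ⊆ π := pcs_subset_self (by rw [hpc]; simp)
              exact this heμ
    rw [hset]
    exact (Pset_count I M hMprops).2
end
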